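/- arXiv:2502.21010 — 8 statements merged into one kernel-verified Lean document; each statement's English description precedes it below -/
import Mathlib

section
/- The function g defined by g(x) = (1/x)·log₂((1+x)/(1−x)) is strictly increasing on the open interval (0,1). -/
open Real Set

lemma hDL (x : ℝ) (h1 : -1 < x) (h2 : x < 1) :
    HasDerivAt (fun x : ℝ => Real.log ((1 + x) / (1 - x))) (2 / (1 - x ^ 2)) x := by
  have hp : (0:ℝ) < 1 + x := by linarith
  have hm : (0:ℝ) < 1 - x := by linarith
  have hu : HasDerivAt (fun x : ℝ => (1 + x) / (1 - x))
      ((1 * (1 - x) - (1 + x) * (-1)) / (1 - x) ^ 2) x :=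
    (((hasDerivAt_id x).const_add 1)).div ((hasDerivAt_id x).const_sub 1) hm.ne'
  have h := hu.log (by positivity)
  convert h using 1
  have hx2 : (1:ℝ) - x ^ 2 ≠ 0 := by nlinarith
  field_simp
  ring

lemma hDphi (x : ℝ) (h1 : -1 < x) (h2 : x < 1) :
    HasDerivAt (fun x : ℝ => 2 * x / (1 - x ^ 2) - Real.log ((1 + x) / (1 - x)))
      (4 * x ^ 2 / (1 - x ^ 2) ^ 2) x := by
  have hx2 : (0:ℝ) < 1 - x ^ 2 := by nlinarith
  have hr : HasDerivAt (fun x : ℝ => 2 * x / (1 - x ^ 2))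
      ((2 * (1 - x ^ 2) - 2 * x * (-(2 * x))) / (1 - x ^ 2) ^ 2) x := by
    have hn : HasDerivAt (fun x : ℝ => 2 * x) 2 x := by
      simpa using (hasDerivAt_id x).const_mul 2
    have hd : HasDerivAt (fun x : ℝ => 1 - x ^ 2) (-(2 * x)) x := by
      simpa using ((hasDerivAt_pow 2 x)).const_sub 1
    exact hn.div hd hx2.ne'
  have h := hr.sub (hDL x h1 h2)
  refine h.congr_deriv ?_
  have hne : (1:ℝ) - x ^ 2 ≠ 0 := hx2.ne'
  field_simp
  ring

lemma key (x : ℝ) (hx : x ∈ Set.Ioo (0:ℝ) 1) :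
    Real.log ((1 + x) / (1 - x)) < 2 * x / (1 - x ^ 2) := by
  obtain ⟨hx0, hx1⟩ := hx
  set φ : ℝ → ℝ := fun x => 2 * x / (1 - x ^ 2) - Real.log ((1 + x) / (1 - x)) with hφ
  have hmono : StrictMonoOn φ (Set.Ico (0:ℝ) 1) := by
    apply strictMonoOn_of_deriv_pos (convex_Ico 0 1)
    · intro y hy
      exact (hDphi y (by linarith [hy.1]) hy.2).continuousAt.continuousWithinAt
    · rw [interior_Ico]
      intro y hy
      rw [(hDphi y (by linarith [hy.1]) hy.2).deriv]
      have h2 : (0:ℝ) < 1 - y ^ 2 := by nlinarith [hy.1, hy.2]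
      exact div_pos (by nlinarith [hy.1]) (by positivity)
  have h0 : φ 0 = 0 := by simp [hφ]
  have := hmono (by constructor <;> norm_num) ⟨hx0.le, hx1⟩ hx0
  rw [h0] at this
  simpa [hφ, sub_pos] using this

/-- The function `g(x) = (1/x) * log₂((1+x)/(1-x))` is strictly increasing on `(0,1)`. -/
theorem stmt_0 :
    StrictMonoOn (fun x : ℝ => (1 / x) * Real.logb 2 ((1 + x) / (1 - x)))
      (Set.Ioo (0 : ℝ) 1) := by
  have hlog2 : (0:ℝ) < Real.log 2 := Real.log_pos (by norm_num)
  have hD : ∀ x ∈ Set.Ioo (0:ℝ) 1,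
      HasDerivAt (fun x : ℝ => (1 / x) * Real.logb 2 ((1 + x) / (1 - x)))
        ((2 * x / (1 - x ^ 2) - Real.log ((1 + x) / (1 - x))) / (x ^ 2 * Real.log 2)) x := by
    intro x hx
    obtain ⟨hx0, hx1⟩ := hx
    have hx2 : (0:ℝ) < 1 - x ^ 2 := by nlinarith
    have heq : (fun x : ℝ => (1 / x) * Real.logb 2 ((1 + x) / (1 - x)))
        = fun x : ℝ => (1 / x) * (Real.log ((1 + x) / (1 - x)) / Real.log 2) := by
      funext y; rw [Real.logb]
    rw [heq]
    have hinv : HasDerivAt (fun x : ℝ => 1 / x) (-(x ^ 2)⁻¹) x := by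
      simpa [one_div] using hasDerivAt_inv hx0.ne'
    have h := hinv.mul ((hDL x (by linarith) hx1).div_const (Real.log 2))
    refine h.congr_deriv ?_
    have hne : (1:ℝ) - x ^ 2 ≠ 0 := hx2.ne'
    have hx0ne : x ≠ 0 := hx0.ne'
    have hl2 : Real.log 2 ≠ 0 := hlog2.ne'
    field_simp
    ring
  apply strictMonoOn_of_deriv_pos (convex_Ioo 0 1)
  · intro x hx
    exact (hD x hx).continuousAt.continuousWithinAt
  · rw [interior_Ioo]
    intro x hx
    rw [(hD x hx).deriv]
    have hk := key x hx
    have hx2 : (0:ℝ) < 1 - x ^ 2 := by nlinarith [hx.1, hx.2]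
    have hnum : (0:ℝ) < 2 * x / (1 - x ^ 2) - Real.log ((1 + x) / (1 - x)) := by linarith
    exact div_pos hnum (mul_pos (pow_pos hx.1 2) hlog2)
end

section
/- Let s be a real number with |s| ≤ 1/2, and define G(z) = (1/4)·H(s·z+s) + (1/4)·H(s·z−s) − (1/2)·H(s·z) for z ∈ [−1,1]. Then G attains its maximum over [−1,1] at z = 1; that is, G(z) ≤ G(1) = (1/4)·H(2s) − (1/2)·H(s) for all z ∈ [−1,1]. -/
/-- `H_y(x) = (1+y+x)·log₂(1+y+x) + (1+y−x)·log₂(1+y−x)`; `H = H_0`. -/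
noncomputable def Hy (y x : ℝ) : ℝ :=
  (1 + y + x) * Real.logb 2 (1 + y + x) + (1 + y - x) * Real.logb 2 (1 + y - x)

/-- Natural-log version of `H`. -/
noncomputable def Hn (t : ℝ) : ℝ :=
  (1 + t) * Real.log (1 + t) + (1 - t) * Real.log (1 - t)

lemma hy_eq (x : ℝ) : Hy 0 x = Hn x / Real.log 2 := by
  unfold Hy Hn Real.logb
  ring_nf

lemma hy_even (x : ℝ) : Hy 0 (-x) = Hy 0 x := by
  unfold Hy; ring_nf

lemma hn_even (x : ℝ) : Hn (-x) = Hn x := by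
  unfold Hn; ring_nf

lemma hy_zero : Hy 0 0 = 0 := by norm_num [Hy]

lemma hn_deriv {t : ℝ} (h1 : -1 < t) (h2 : t < 1) :
    HasDerivAt Hn (Real.log (1+t) - Real.log (1-t)) t := by
  have h1' : (1:ℝ) + t ≠ 0 := by linarith
  have h2' : (1:ℝ) - t ≠ 0 := by linarith
  have inner1 : HasDerivAt (fun t : ℝ => 1 + t) 1 t := by
    simpa using (hasDerivAt_id t).const_add 1
  have inner2 : HasDerivAt (fun t : ℝ => 1 - t) (-1) t := by
    simpa using (hasDerivAt_id t).const_sub 1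
  have A := (Real.hasDerivAt_mul_log h1').comp t inner1
  have B := (Real.hasDerivAt_mul_log h2').comp t inner2
  have C := A.add B
  have hEq : (Real.log (1+t) + 1) * 1 + (Real.log (1-t) + 1) * (-1)
      = Real.log (1+t) - Real.log (1-t) := by ring
  rw [hEq] at C
  exact C

lemma hn_cont : Continuous Hn := by
  unfold Hn
  exact (Real.continuous_mul_log.comp (continuous_const.add continuous_id)).add
    (Real.continuous_mul_log.comp (continuous_const.sub continuous_id))

/-- Key monotonicity fact: the second difference is maximized at the endpoint. -/
lemma keyN (s : ℝ) (hs0 : 0 ≤ s) (hs : s ≤ 1/2) (x : ℝ) (hx : x ∈ Set.Icc (-s) s) :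
    Hn (x+s) + Hn (x-s) - 2*Hn x ≤ Hn (2*s) + Hn 0 - 2*Hn s := by
  have mono : MonotoneOn (fun x => Hn (x+s) + Hn (x-s) - 2*Hn x) (Set.Icc 0 s) := by
    have hder : ∀ y ∈ Set.Ioo (0:ℝ) s,
        HasDerivAt (fun x => Hn (x+s) + Hn (x-s) - 2*Hn x)
          ((Real.log (1+(y+s)) - Real.log (1-(y+s)))
            + (Real.log (1+(y-s)) - Real.log (1-(y-s)))
            - 2*(Real.log (1+y) - Real.log (1-y))) y := by
      intro y hy
      obtain ⟨hy0, hys⟩ := hy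
      have b1 : -1 < y + s := by linarith
      have b2 : y + s < 1 := by linarith
      have b3 : -1 < y - s := by linarith
      have b4 : y - s < 1 := by linarith
      have b5 : -1 < y := by linarith
      have b6 : y < 1 := by linarith
      have A1 : HasDerivAt (fun x : ℝ => Hn (x+s))
          (Real.log (1+(y+s)) - Real.log (1-(y+s))) y := by
        have := (hn_deriv b1 b2).comp y ((hasDerivAt_id y).add_const s)
        simpa [Function.comp_def] using this
      have A2 : HasDerivAt (fun x : ℝ => Hn (x-s))
          (Real.log (1+(y-s)) - Real.log (1-(y-s))) y := by
        have := (hn_deriv b3 b4).comp y ((hasDerivAt_id y).sub_const s)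
        simpa [Function.comp_def] using this
      have A3 : HasDerivAt (fun x : ℝ => 2*Hn x)
          (2*(Real.log (1+y) - Real.log (1-y))) y := (hn_deriv b5 b6).const_mul 2
      exact (A1.add A2).sub A3
    apply monotoneOn_of_deriv_nonneg (convex_Icc 0 s)
    · exact (((hn_cont.comp (continuous_id.add continuous_const)).add
        (hn_cont.comp (continuous_id.sub continuous_const))).sub
        (continuous_const.mul hn_cont)).continuousOn
    · intro y hy
      rw [interior_Icc] at hy
      exact ((hder y hy).differentiableAt).differentiableWithinAt
    · intro y hy
      rw [interior_Icc] at hy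
      rw [(hder y hy).deriv]
      obtain ⟨hy0, hys⟩ := hy
      have p1 : (0:ℝ) < 1 + (y+s) := by linarith
      have p2 : (0:ℝ) < 1 - (y+s) := by linarith
      have p3 : (0:ℝ) < 1 + (y-s) := by linarith
      have p4 : (0:ℝ) < 1 - (y-s) := by linarith
      have p5 : (0:ℝ) < 1 + y := by linarith
      have p6 : (0:ℝ) < 1 - y := by linarith
      have hprod : (1-(y+s)) * (1-(y-s)) * (1+y) * (1+y)
          ≤ (1+(y+s)) * (1+(y-s)) * (1-y) * (1-y) := by
        have h4 : 0 ≤ 4*(s^2*y) := by positivity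
        nlinarith [h4]
      have hlog := Real.log_le_log (by positivity) hprod
      rw [Real.log_mul (by positivity) p5.ne', Real.log_mul (by positivity) p5.ne',
        Real.log_mul p2.ne' p4.ne', Real.log_mul (by positivity) p6.ne',
        Real.log_mul (by positivity) p6.ne', Real.log_mul p1.ne' p3.ne'] at hlog
      linarith
  have hFs : Hn (s+s) + Hn (s-s) - 2*Hn s = Hn (2*s) + Hn 0 - 2*Hn s := by
    rw [show s+s = 2*s by ring, sub_self]
  rcases le_or_gt 0 x with h | h
  · have h2 : Hn (x+s) + Hn (x-s) - 2*Hn x ≤ Hn (s+s) + Hn (s-s) - 2*Hn s :=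
      mono ⟨h, hx.2⟩ ⟨hs0, le_refl s⟩ hx.2
    linarith [hFs ▸ h2]
  · have hx' : -x ∈ Set.Icc (0:ℝ) s := ⟨by linarith, by linarith [hx.1]⟩
    have h2 : Hn (-x+s) + Hn (-x-s) - 2*Hn (-x) ≤ Hn (s+s) + Hn (s-s) - 2*Hn s :=
      mono hx' ⟨hs0, le_refl s⟩ hx'.2
    rw [show -x + s = -(x-s) by ring, show -x - s = -(x+s) by ring,
      hn_even, hn_even, hn_even, hFs] at h2
    linarith

lemma key_s2 (s : ℝ) (hs0 : 0 ≤ s) (hs : s ≤ 1/2) (x : ℝ) (hx : x ∈ Set.Icc (-s) s) :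
    Hy 0 (x+s) + Hy 0 (x-s) - 2*Hy 0 x ≤ Hy 0 (2*s) + Hy 0 0 - 2*Hy 0 s := by
  have h := keyN s hs0 hs x hx
  have hl : (0:ℝ) < Real.log 2 := Real.log_pos (by norm_num)
  rw [hy_eq, hy_eq, hy_eq, hy_eq, hy_eq, hy_eq]
  calc Hn (x+s)/Real.log 2 + Hn (x-s)/Real.log 2 - 2*(Hn x/Real.log 2)
      = (Hn (x+s) + Hn (x-s) - 2*Hn x)/Real.log 2 := by ring
    _ ≤ (Hn (2*s) + Hn 0 - 2*Hn s)/Real.log 2 := by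
        exact div_le_div_of_nonneg_right h hl.le
    _ = Hn (2*s)/Real.log 2 + Hn 0/Real.log 2 - 2*(Hn s/Real.log 2) := by ring

lemma part1 (s : ℝ) (hs0 : 0 ≤ s) (hs : s ≤ 1/2) (z : ℝ) (hz : z ∈ Set.Icc (-1:ℝ) 1) :
    1/4 * Hy 0 (s*z+s) + 1/4 * Hy 0 (s*z-s) - 1/2 * Hy 0 (s*z)
      ≤ 1/4 * Hy 0 (2*s) - 1/2 * Hy 0 s := by
  have hx : s*z ∈ Set.Icc (-s) s := by
    constructor
    · nlinarith [hz.1, hz.2]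
    · nlinarith [hz.1, hz.2]
  have h := key_s2 s hs0 hs (s*z) hx
  rw [hy_zero] at h
  linarith

/-- For `|s| ≤ 1/2`, `G(z) = (1/4)H(sz+s) + (1/4)H(sz−s) − (1/2)H(sz)` attains its maximum
over `[-1,1]` at `z = 1`, and `G(1) = (1/4)H(2s) − (1/2)H(s)`. -/
theorem stmt_2 (s : ℝ) (hs : |s| ≤ 1 / 2) (G : ℝ → ℝ)
    (hG : ∀ z, G z =
      (1 / 4) * Hy 0 (s * z + s) + (1 / 4) * Hy 0 (s * z - s) - (1 / 2) * Hy 0 (s * z)) :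
    (∀ z ∈ Set.Icc (-1 : ℝ) 1, G z ≤ G 1) ∧
      G 1 = (1 / 4) * Hy 0 (2 * s) - (1 / 2) * Hy 0 s := by
  have hG1 : G 1 = (1 / 4) * Hy 0 (2 * s) - (1 / 2) * Hy 0 s := by
    rw [hG 1, show s*1+s = 2*s by ring, show s*1-s = (0:ℝ) by ring, mul_one, hy_zero]
    ring
  refine ⟨?_, hG1⟩
  intro z hz
  rw [hG z, hG1]
  rcases abs_cases s with ⟨h1, h2⟩ | ⟨h1, h2⟩
  · exact part1 s h2 (h1 ▸ hs) z hz
  · have e1 : Hy 0 (s*z + s) = Hy 0 ((-s)*z + (-s)) := by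
      rw [show s*z+s = -((-s)*z + (-s)) by ring, hy_even]
    have e2 : Hy 0 (s*z - s) = Hy 0 ((-s)*z - (-s)) := by
      rw [show s*z-s = -((-s)*z - (-s)) by ring, hy_even]
    have e3 : Hy 0 (s*z) = Hy 0 ((-s)*z) := by
      rw [show s*z = -((-s)*z) by ring, hy_even]
    have e4 : Hy 0 (2*s) = Hy 0 (2*(-s)) := by
      rw [show 2*s = -(2*(-s)) by ring, hy_even]
    have e5 : Hy 0 s = Hy 0 (-s) := by
      rw [hy_even]
    rw [e1, e2, e3, e4, e5]
    exact part1 (-s) (by linarith) (by linarith [h1 ▸ hs]) z hz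
end

section
/- Let s, c, c₃, z be real numbers with c₃ ≤ 0, 0 ≤ z ≤ 1, 1+s+s·z > 0 and 1+s−s·z > 0. Define K₊ = √((s+c₃z)² + c²(1−z²)), K₋ = √((s−c₃z)² + c²(1−z²)), B₊ = K₊/(1+s+s·z) and B₋ = K₋/(1+s−s·z). Then s·(B₊² − B₋²) ≤ 0. -/
/-- With `c₃ ≤ 0`, `0 ≤ z ≤ 1`, `1+s+sz > 0`, `1+s−sz > 0`,
`K₊ = √((s+c₃z)²+c²(1−z²))`, `K₋ = √((s−c₃z)²+c²(1−z²))`,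
`B₊ = K₊/(1+s+sz)`, `B₋ = K₋/(1+s−sz)`, one has `s(B₊² − B₋²) ≤ 0`. -/
theorem stmt_5 (s c c₃ z : ℝ) (h3 : c₃ ≤ 0) (hz0 : 0 ≤ z) (hz1 : z ≤ 1)
    (hp : 1 + s + s * z > 0) (hm : 1 + s - s * z > 0) :
    s * ((Real.sqrt ((s + c₃ * z) ^ 2 + c ^ 2 * (1 - z ^ 2)) / (1 + s + s * z)) ^ 2
       - (Real.sqrt ((s - c₃ * z) ^ 2 + c ^ 2 * (1 - z ^ 2)) / (1 + s - s * z)) ^ 2) ≤ 0 := by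
  have hz2 : 0 ≤ 1 - z ^ 2 := by nlinarith
  have hAp : 0 ≤ (s + c₃ * z) ^ 2 + c ^ 2 * (1 - z ^ 2) :=
    add_nonneg (sq_nonneg _) (mul_nonneg (sq_nonneg c) hz2)
  have hAm : 0 ≤ (s - c₃ * z) ^ 2 + c ^ 2 * (1 - z ^ 2) :=
    add_nonneg (sq_nonneg _) (mul_nonneg (sq_nonneg c) hz2)
  rw [div_pow, div_pow, Real.sq_sqrt hAp, Real.sq_sqrt hAm,
    div_sub_div _ _ (pow_ne_zero 2 hp.ne') (pow_ne_zero 2 hm.ne')]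
  rw [← mul_div_assoc]
  have h1s : (0:ℝ) < 1 + s := by linarith
  have hq : 0 ≤ s ^ 2 + c₃ ^ 2 * z ^ 2 + c ^ 2 * (1 - z ^ 2) := by positivity
  have key : s * (((s + c₃ * z) ^ 2 + c ^ 2 * (1 - z ^ 2)) * (1 + s - s * z) ^ 2
      - (1 + s + s * z) ^ 2 * ((s - c₃ * z) ^ 2 + c ^ 2 * (1 - z ^ 2))) ≤ 0 := by
    nlinarith [mul_nonneg (mul_nonneg (mul_nonneg (sq_nonneg s) hz0) h1s.le) hq,
      mul_nonneg (mul_nonneg (mul_nonneg (sq_nonneg s) hz0) (neg_nonneg.2 h3))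
        (add_nonneg (sq_nonneg (1 + s)) (sq_nonneg (s * z)))]
  exact div_nonpos_of_nonpos_of_nonneg key (by positivity)
end

section
/- Let s, c₁, c₂, c₃ be real numbers, set c = max(|c₁|,|c₂|), and assume c₃ ≤ 0, c² ≤ c₃² and 3|s| + |c₃| ≤ 1. Define ψ(z) = c²(1−z²) + c₃²z² and F(z₀,z₁) = (1/8)·[ H_{s+s z₀}(√(s²+2sc₃z₀+ψ(z₀))) + H_{s−s z₀}(√(s²−2sc₃z₀+ψ(z₀))) + H_{−s+s z₁}(√(s²+2sc₃z₁+ψ(z₁))) + H_{−s−s z₁}(√(s²−2sc₃z₁+ψ(z₁))) − 2·H_s(s z₀) − 2·H_{−s}(s z₁) ]. Then F is monotone nondecreasing in each of its two variables on [0,1]×[0,1]; in particular F(z₀,z₁) ≤ F(1,1) for all z₀, z₁ ∈ [0,1]. -/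
set_option maxHeartbeats 1600000

open Real Set

/-- `ψ(z) = c²(1−z²) + c₃²z²`. -/
noncomputable def psi (c c₃ z : ℝ) : ℝ := c ^ 2 * (1 - z ^ 2) + c₃ ^ 2 * z ^ 2

/-- The function `F(z₀,z₁)` from the three-qubit optimization. -/
noncomputable def F6 (s c c₃ z₀ z₁ : ℝ) : ℝ :=
  (1 / 8) *
    (Hy (s + s * z₀) (Real.sqrt (s ^ 2 + 2 * s * c₃ * z₀ + psi c c₃ z₀))
      + Hy (s - s * z₀) (Real.sqrt (s ^ 2 - 2 * s * c₃ * z₀ + psi c c₃ z₀))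
      + Hy (-s + s * z₁) (Real.sqrt (s ^ 2 + 2 * s * c₃ * z₁ + psi c c₃ z₁))
      + Hy (-s - s * z₁) (Real.sqrt (s ^ 2 - 2 * s * c₃ * z₁ + psi c c₃ z₁))
      - 2 * Hy s (s * z₀) - 2 * Hy (-s) (s * z₁))

lemma phi_hasDerivAt {t : ℝ} (ht : 0 < t) :
    HasDerivAt (fun t : ℝ => t * Real.logb 2 t) ((Real.log t + 1) / Real.log 2) t := by
  have h1 : HasDerivAt (fun t : ℝ => t * Real.log t) (Real.log t + 1) t :=
    Real.hasDerivAt_mul_log ht.ne'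
  have h2 := h1.div_const (Real.log 2)
  have h3 : (fun t : ℝ => t * Real.log t / Real.log 2) = fun t : ℝ => t * Real.logb 2 t := by
    funext x; rw [Real.logb]; ring
  rwa [h3] at h2

lemma phi_comp {f : ℝ → ℝ} {f' : ℝ} {z : ℝ} (hf : HasDerivAt f f' z) (hpos : 0 < f z) :
    HasDerivAt (fun z => f z * Real.logb 2 (f z)) ((Real.log (f z) + 1) / Real.log 2 * f') z :=
  (phi_hasDerivAt hpos).comp z hf

lemma phi_continuous : Continuous (fun t : ℝ => t * Real.logb 2 t) := by
  have h : (fun t : ℝ => t * Real.logb 2 t) = fun t => -(Real.negMulLog t) * (Real.log 2)⁻¹ := by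
    funext t; simp [Real.negMulLog, Real.logb, div_eq_mul_inv]; ring
  rw [h]; exact (Real.continuous_negMulLog.neg).mul continuous_const

lemma log_ratio_le {u r : ℝ} (h0 : 0 ≤ r) (hru : r < u) :
    Real.log (u + r) - Real.log (u - r) ≤ r * (1 / (u + r) + 1 / (u - r)) := by
  have hm : 0 < u - r := by linarith
  have hp : 0 < u + r := by linarith
  have h1 : Real.log (u + r) - Real.log (u - r) = Real.log ((u + r) / (u - r)) := by
    rw [Real.log_div hp.ne' hm.ne']
  have ht : 0 < (u + r) / (u - r) := div_pos hp hm
  have ht1 : 0 ≤ Real.log ((u + r) / (u - r)) := by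
    apply Real.log_nonneg
    rw [le_div_iff₀ hm]; linarith
  have h2 : Real.log ((u + r) / (u - r)) ≤ Real.sinh (Real.log ((u + r) / (u - r))) :=
    Real.self_le_sinh_iff.2 ht1
  rw [Real.sinh_log ht] at h2
  rw [h1]
  refine h2.trans (le_of_eq ?_)
  field_simp
  ring

lemma key_ratio {u r r' : ℝ} (h0 : 0 ≤ r) (hrr : r ≤ r') (hru : r' < u) :
    r' * (Real.log (u + r) - Real.log (u - r)) ≤ r * (Real.log (u + r') - Real.log (u - r')) := by
  set L := Real.log (u + r) - Real.log (u - r) with hL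
  have hmono : MonotoneOn (fun t => r * (Real.log (u + t) - Real.log (u - t)) - t * L)
      (Icc r r') := by
    apply monotoneOn_of_hasDerivWithinAt_nonneg (convex_Icc r r')
      (f' := fun t => r * (1 / (u + t) + 1 / (u - t)) - L)
    · apply ContinuousOn.sub
      · apply ContinuousOn.mul continuousOn_const
        apply ContinuousOn.sub
        · apply ContinuousOn.log (by fun_prop)
          intro t ht; simp only [mem_Icc] at ht; nlinarith [ht.1, ht.2]
        · apply ContinuousOn.log (by fun_prop)
          intro t ht; simp only [mem_Icc] at ht; nlinarith [ht.1, ht.2]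
      · exact (continuousOn_id.mul continuousOn_const)
    · intro t ht
      rw [interior_Icc] at ht
      obtain ⟨ht1, ht2⟩ := ht
      have hp : 0 < u + t := by linarith
      have hm : 0 < u - t := by linarith
      have hd1 : HasDerivAt (fun t => Real.log (u + t)) (1 / (u + t)) t := by
        have := (Real.hasDerivAt_log hp.ne').comp t ((hasDerivAt_id t).const_add u)
        simpa [one_div, Function.comp_def] using this
      have hd2 : HasDerivAt (fun t => Real.log (u - t)) (-(1 / (u - t))) t := by
        have := (Real.hasDerivAt_log hm.ne').comp t ((hasDerivAt_id t).const_sub u)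
        simpa [one_div, Function.comp_def] using this
      have := (((hd1.sub hd2).const_mul r).sub ((hasDerivAt_id t).mul_const L))
      apply HasDerivAt.hasDerivWithinAt
      convert this using 1
      · funext y; simp only [Pi.sub_apply, id_eq]
      · ring
    · intro t ht
      rw [interior_Icc] at ht
      obtain ⟨ht1, ht2⟩ := ht
      have hp : 0 < u + t := by linarith
      have hm : 0 < u - t := by linarith
      have hpr : 0 < u + r := by linarith
      have hmr : 0 < u - r := by linarith
      have step1 : L ≤ r * (1 / (u + r) + 1 / (u - r)) := log_ratio_le h0 (by linarith)
      have step2 : 1 / (u + r) + 1 / (u - r) ≤ 1 / (u + t) + 1 / (u - t) := by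
        have e1 : 1 / (u + t) ≥ 1 / (u + r) - (t - r) / ((u + r) * (u - r)) := by
          rw [ge_iff_le, div_sub_div _ _ (by positivity) (by positivity),
            div_le_div_iff₀ (by positivity) hp]
          have htr : r * r ≤ t * t := by nlinarith
          nlinarith [htr, mul_pos hpr hmr]
        have e2 : 1 / (u - t) ≥ 1 / (u - r) + (t - r) / ((u + r) * (u - r)) := by
          rw [ge_iff_le, div_add_div _ _ (by positivity) (by positivity),
            div_le_div_iff₀ (by positivity) hm]
          have htr : r * r ≤ t * t := by nlinarith
          nlinarith [htr, mul_pos hpr hmr]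
        linarith
      have : r * (1 / (u + r) + 1 / (u - r)) ≤ r * (1 / (u + t) + 1 / (u - t)) :=
        mul_le_mul_of_nonneg_left step2 h0
      linarith
  have h := hmono (left_mem_Icc.2 hrr) (right_mem_Icc.2 hrr) hrr
  simp only at h
  nlinarith [h]

lemma log_u_mono {u v r : ℝ} (hvu : v ≤ u) (hr : 0 ≤ r) (hpos : 0 < v - r) :
    Real.log (u + r) - Real.log (u - r) ≤ Real.log (v + r) - Real.log (v - r) := by
  have hvr : 0 < v + r := by linarith
  have hur : 0 < u - r := by linarith
  have hupr : 0 < u + r := by linarith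
  have key : (u + r) * (v - r) ≤ (v + r) * (u - r) := by nlinarith [mul_nonneg hr (sub_nonneg.2 hvu)]
  have h' := Real.log_le_log (mul_pos hupr hpos) key
  rw [Real.log_mul hupr.ne' hpos.ne', Real.log_mul hvr.ne' hur.ne'] at h'
  linarith

lemma Qlt (s c c₃ x ε : ℝ) (hcpos : 0 < c) (h1 : c₃ ≤ 0) (h2 : c ^ 2 ≤ c₃ ^ 2)
    (h3 : 3 * |s| + |c₃| ≤ 1) (hx0 : 0 < x) (hx1 : x < 1)
    (hnd : s ≠ 0 ∨ c ^ 2 < c₃ ^ 2) (hε : ε = 1 ∨ ε = -1) :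
    s ^ 2 + ε * (2 * s * c₃ * x) + (c ^ 2 * (1 - x ^ 2) + c₃ ^ 2 * x ^ 2)
      < (1 - |s| * (1 + x)) ^ 2 := by
  have hsabs := sq_abs s
  have hcabs := sq_abs c₃
  have ha0 := abs_nonneg s
  have hb0 := abs_nonneg c₃
  have habs : ε * (2 * s * c₃ * x) ≤ 2 * (|s| * |c₃|) * x := by
    have h := le_abs_self (s * c₃)
    have h' := neg_abs_le (s * c₃)
    have habsm : |s * c₃| = |s| * |c₃| := abs_mul s c₃
    rcases hε with h0 | h0 <;> subst h0
    · nlinarith [mul_nonneg (show (0:ℝ) ≤ |s| * |c₃| - s * c₃ by rw [← habsm]; linarith) hx0.le]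
    · nlinarith [mul_nonneg (show (0:ℝ) ≤ |s| * |c₃| + s * c₃ by rw [← habsm]; linarith) hx0.le]
  have e3a : 0 ≤ 1 - |s| * (1 + x) - (|s| + |c₃|) := by nlinarith
  have e3b : 0 ≤ 1 - |s| * (1 + x) + (|s| + |c₃|) := by nlinarith
  have e3 : (|s| + |c₃|) ^ 2 ≤ (1 - |s| * (1 + x)) ^ 2 := by nlinarith [mul_nonneg e3a e3b]
  rcases hnd with hs | hlt
  · have ha : 0 < |s| := abs_pos.2 hs
    have hb : 0 < |c₃| := by
      rcases eq_or_lt_of_le hb0 with h0 | h0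
      · exfalso; nlinarith [sq_abs c₃]
      · exact h0
    have e2 : |s| ^ 2 + 2 * (|s| * |c₃|) * x + |c₃| ^ 2 < (|s| + |c₃|) ^ 2 := by
      nlinarith [mul_pos (mul_pos ha hb) (show (0:ℝ) < 1 - x by linarith)]
    nlinarith [mul_nonneg (sub_nonneg.2 h2) (show (0:ℝ) ≤ 1 - x ^ 2 by nlinarith)]
  · have e1 : c ^ 2 * (1 - x ^ 2) + c₃ ^ 2 * x ^ 2 < |c₃| ^ 2 := by
      nlinarith [mul_pos (sub_pos.2 hlt) (show (0:ℝ) < 1 - x ^ 2 by nlinarith)]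
    have e2 : |s| ^ 2 + 2 * (|s| * |c₃|) * x ≤ |s| ^ 2 + 2 * (|s| * |c₃|) := by
      nlinarith [mul_nonneg (mul_nonneg ha0 hb0) (show (0:ℝ) ≤ 1 - x by linarith)]
    nlinarith



lemma prod_key {u v p m : ℝ} (hv : 0 ≤ v) (hvu : v ≤ u) (hpm : p ^ 2 ≤ m ^ 2) :
    (v + m) * ((v - m) * (u * u)) ≤ (u + p) * ((u - p) * (v * v)) := by
  have h1 : 0 ≤ (m ^ 2 - p ^ 2) * u ^ 2 := mul_nonneg (by linarith) (sq_nonneg u)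
  have h2 : 0 ≤ p ^ 2 * (u ^ 2 - v ^ 2) := mul_nonneg (sq_nonneg p) (by nlinarith)
  nlinarith [h1, h2]

lemma Hy_even (y x : ℝ) : Hy y (-x) = Hy y x := by
  simp only [Hy]; ring_nf

lemma Hy_sqrt_sq (y w : ℝ) : Hy y (Real.sqrt (w ^ 2)) = Hy y w := by
  rw [Real.sqrt_sq_eq_abs]
  rcases abs_choice w with h | h
  · rw [h]
  · rw [h, Hy_even]


lemma caseB (s c₃ : ℝ) (h1 : c₃ ≤ 0) (h3 : 3 * |s| + |c₃| ≤ 1) :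
    MonotoneOn (fun z => Hy (s + s * z) (Real.sqrt (s ^ 2 + 2 * s * c₃ * z + psi 0 c₃ z))
      + Hy (s - s * z) (Real.sqrt (s ^ 2 - 2 * s * c₃ * z + psi 0 c₃ z))
      - 2 * Hy s (s * z)) (Set.Icc 0 1) := by
  have ef : (fun z => Hy (s + s * z) (Real.sqrt (s ^ 2 + 2 * s * c₃ * z + psi 0 c₃ z))
      + Hy (s - s * z) (Real.sqrt (s ^ 2 - 2 * s * c₃ * z + psi 0 c₃ z))
      - 2 * Hy s (s * z))
      = (fun z => Hy (s + s * z) (s + c₃ * z) + Hy (s - s * z) (s - c₃ * z)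
        - 2 * Hy s (s * z)) := by
    funext z
    rw [show s ^ 2 + 2 * s * c₃ * z + psi 0 c₃ z = (s + c₃ * z) ^ 2 by simp [psi]; ring,
      show s ^ 2 - 2 * s * c₃ * z + psi 0 c₃ z = (s - c₃ * z) ^ 2 by simp [psi]; ring,
      Hy_sqrt_sq, Hy_sqrt_sq]
  rw [ef]
  simp only [Hy]
  have hL2 : 0 < Real.log 2 := Real.log_pos one_lt_two
  apply monotoneOn_of_hasDerivWithinAt_nonneg (convex_Icc 0 1)
    (f' := fun x =>
      (Real.log (1 + (s + s * x) + (s + c₃ * x)) + 1) / Real.log 2 * (s + c₃)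
      + (Real.log (1 + (s + s * x) - (s + c₃ * x)) + 1) / Real.log 2 * (s - c₃)
      + ((Real.log (1 + (s - s * x) + (s - c₃ * x)) + 1) / Real.log 2 * (-s - c₃)
      + (Real.log (1 + (s - s * x) - (s - c₃ * x)) + 1) / Real.log 2 * (-s + c₃))
      - 2 * ((Real.log (1 + s + s * x) + 1) / Real.log 2 * s
        + (Real.log (1 + s - s * x) + 1) / Real.log 2 * (-s)))
  · -- continuity
    apply Continuous.continuousOn
    have hcomp : ∀ (p q r : ℝ), Continuous (fun z : ℝ =>
        (p + q * z) * Real.logb 2 (p + q * z) + (r - q * z) * Real.logb 2 (r - q * z)) := by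
      intro p q r
      exact (phi_continuous.comp (by fun_prop)).add (phi_continuous.comp (by fun_prop))
    have c1 : Continuous (fun z : ℝ => (1 + (s + s * z) + (s + c₃ * z)) *
        Real.logb 2 (1 + (s + s * z) + (s + c₃ * z))) := phi_continuous.comp (by fun_prop)
    have c2 : Continuous (fun z : ℝ => (1 + (s + s * z) - (s + c₃ * z)) *
        Real.logb 2 (1 + (s + s * z) - (s + c₃ * z))) := phi_continuous.comp (by fun_prop)
    have c3 : Continuous (fun z : ℝ => (1 + (s - s * z) + (s - c₃ * z)) *
        Real.logb 2 (1 + (s - s * z) + (s - c₃ * z))) := phi_continuous.comp (by fun_prop)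
    have c4 : Continuous (fun z : ℝ => (1 + (s - s * z) - (s - c₃ * z)) *
        Real.logb 2 (1 + (s - s * z) - (s - c₃ * z))) := phi_continuous.comp (by fun_prop)
    have c5 : Continuous (fun z : ℝ => (1 + s + s * z) * Real.logb 2 (1 + s + s * z)) :=
      phi_continuous.comp (by fun_prop)
    have c6 : Continuous (fun z : ℝ => (1 + s - s * z) * Real.logb 2 (1 + s - s * z)) :=
      phi_continuous.comp (by fun_prop)
    exact ((c1.add c2).add (c3.add c4)).sub (continuous_const.mul (c5.add c6))
  · -- derivative
    intro x hx
    rw [interior_Icc] at hx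
    obtain ⟨hx0, hx1⟩ := hx
    have hs1 := neg_abs_le s
    have hs2 := le_abs_self s
    have hb1 := neg_abs_le c₃
    have hb2 := le_abs_self c₃
    have hsx1 : 0 ≤ (s + |s|) * x := mul_nonneg (by linarith) hx0.le
    have hsx2 : 0 ≤ (|s| - s) * x := mul_nonneg (by linarith) hx0.le
    have hbx1 : 0 ≤ (c₃ + |c₃|) * x := mul_nonneg (by linarith) hx0.le
    have hbx2 : 0 ≤ (|c₃| - c₃) * x := mul_nonneg (by linarith) hx0.le
    have hcore : 0 < 1 - 2 * |s| - (|s| + |c₃|) * x := by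
      rcases eq_or_lt_of_le (by positivity : (0:ℝ) ≤ |s| + |c₃|) with h | h
      · nlinarith [abs_nonneg s, abs_nonneg c₃]
      · nlinarith [mul_pos h (by linarith : (0:ℝ) < 1 - x), abs_nonneg s]
    have hApos : 0 < 1 + (s + s * x) + (s + c₃ * x) := by nlinarith
    have hBpos : 0 < 1 + (s + s * x) - (s + c₃ * x) := by nlinarith
    have hCpos : 0 < 1 + (s - s * x) + (s - c₃ * x) := by nlinarith
    have hDpos : 0 < 1 + (s - s * x) - (s - c₃ * x) := by nlinarith
    have hUpos : 0 < 1 + s + s * x := by nlinarith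
    have hVpos : 0 < 1 + s - s * x := by nlinarith
    have hsz : HasDerivAt (fun z : ℝ => s * z) s x := by
      simpa using (hasDerivAt_id x).const_mul s
    have hbz : HasDerivAt (fun z : ℝ => c₃ * z) c₃ x := by
      simpa using (hasDerivAt_id x).const_mul c₃
    have hA : HasDerivAt (fun z : ℝ => 1 + (s + s * z) + (s + c₃ * z)) (s + c₃) x := by
      have := (((hsz.const_add s).const_add 1).add (hbz.const_add s))
      exact this.congr_deriv (by ring)
    have hB : HasDerivAt (fun z : ℝ => 1 + (s + s * z) - (s + c₃ * z)) (s - c₃) x := by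
      have := (((hsz.const_add s).const_add 1).sub (hbz.const_add s))
      exact this.congr_deriv (by ring)
    have hC : HasDerivAt (fun z : ℝ => 1 + (s - s * z) + (s - c₃ * z)) (-s - c₃) x := by
      have := (((hsz.const_sub s).const_add 1).add (hbz.const_sub s))
      exact this.congr_deriv (by ring)
    have hD : HasDerivAt (fun z : ℝ => 1 + (s - s * z) - (s - c₃ * z)) (-s + c₃) x := by
      have := (((hsz.const_sub s).const_add 1).sub (hbz.const_sub s))
      exact this.congr_deriv (by ring)
    have hU : HasDerivAt (fun z : ℝ => 1 + s + s * z) s x := by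
      have := (hsz.const_add (1 + s))
      convert this using 1 <;> ring
    have hV : HasDerivAt (fun z : ℝ => 1 + s - s * z) (-s) x := by
      have := (hsz.const_sub (1 + s))
      convert this using 1 <;> ring
    have big := (((phi_comp hA hApos).add (phi_comp hB hBpos)).add
      ((phi_comp hC hCpos).add (phi_comp hD hDpos))).sub
      (((phi_comp hU hUpos).add (phi_comp hV hVpos)).const_mul 2)
    exact big.hasDerivWithinAt
  · -- nonnegativity
    intro x hx
    rw [interior_Icc] at hx
    obtain ⟨hx0, hx1⟩ := hx
    have hs1 := neg_abs_le s
    have hs2 := le_abs_self s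
    have hb1 := neg_abs_le c₃
    have hb2 := le_abs_self c₃
    have hsx1 : 0 ≤ (s + |s|) * x := mul_nonneg (by linarith) hx0.le
    have hsx2 : 0 ≤ (|s| - s) * x := mul_nonneg (by linarith) hx0.le
    have hbx1 : 0 ≤ (c₃ + |c₃|) * x := mul_nonneg (by linarith) hx0.le
    have hbx2 : 0 ≤ (|c₃| - c₃) * x := mul_nonneg (by linarith) hx0.le
    have hcore : 0 < 1 - 2 * |s| - (|s| + |c₃|) * x := by
      rcases eq_or_lt_of_le (by positivity : (0:ℝ) ≤ |s| + |c₃|) with h | h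
      · nlinarith [abs_nonneg s, abs_nonneg c₃]
      · nlinarith [mul_pos h (by linarith : (0:ℝ) < 1 - x), abs_nonneg s]
    have hApos : 0 < 1 + (s + s * x) + (s + c₃ * x) := by nlinarith
    have hBpos : 0 < 1 + (s + s * x) - (s + c₃ * x) := by nlinarith
    have hCpos : 0 < 1 + (s - s * x) + (s - c₃ * x) := by nlinarith
    have hDpos : 0 < 1 + (s - s * x) - (s - c₃ * x) := by nlinarith
    have hUpos : 0 < 1 + s + s * x := by nlinarith
    have hVpos : 0 < 1 + s - s * x := by nlinarith
    rw [show (1 + s + s * x : ℝ) = 1 + (s + s * x) by ring,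
      show (1 + s - s * x : ℝ) = 1 + (s - s * x) by ring]
    have hU2 : 0 < 1 + (s + s * x) := by linarith
    have hV2 : 0 < 1 + (s - s * x) := by linarith
    set lA := Real.log (1 + (s + s * x) + (s + c₃ * x)) with hlA
    set lB := Real.log (1 + (s + s * x) - (s + c₃ * x)) with hlB
    set lC := Real.log (1 + (s - s * x) + (s - c₃ * x)) with hlC
    set lD := Real.log (1 + (s - s * x) - (s - c₃ * x)) with hlD
    set lU := Real.log (1 + (s + s * x)) with hlU
    set lV := Real.log (1 + (s - s * x)) with hlV
    have hM : 0 ≤ s * ((lA + lB - 2 * lU) - (lC + lD - 2 * lV))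
        + (-c₃) * ((lB - lA) - (lD - lC)) := by
      have hterm2 : (lB - lA) - (lD - lC) ≥ 0 := by
        -- lA + lD ≤ lB + lC
        have key : (1 + (s + s * x) + (s + c₃ * x)) * (1 + (s - s * x) - (s - c₃ * x))
            ≤ (1 + (s + s * x) - (s + c₃ * x)) * (1 + (s - s * x) + (s - c₃ * x)) := by
          nlinarith [mul_nonneg (mul_nonneg hx0.le (by linarith : (0:ℝ) ≤ -c₃))
            (by nlinarith : (0:ℝ) ≤ 1 + s), mul_nonneg hx0.le (sq_nonneg s)]
        have h' := Real.log_le_log (by positivity) key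
        rw [Real.log_mul hApos.ne' hDpos.ne', Real.log_mul hBpos.ne' hCpos.ne'] at h'
        rw [← hlA, ← hlB, ← hlC, ← hlD] at h'
        linarith
      have hterm1 : 0 ≤ s * ((lA + lB - 2 * lU) - (lC + lD - 2 * lV)) := by
        rcases le_or_gt 0 s with hs | hs
        · have key := prod_key (u := 1 + (s + s * x)) (v := 1 + (s - s * x))
            (p := s + c₃ * x) (m := s - c₃ * x) hV2.le
            (by nlinarith [mul_nonneg hs hx0.le])
            (by nlinarith [mul_nonneg (mul_nonneg hs hx0.le) (show (0:ℝ) ≤ -c₃ by linarith)])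
          have h' := Real.log_le_log (mul_pos hCpos (mul_pos hDpos (mul_pos hU2 hU2))) key
          rw [Real.log_mul hCpos.ne' (mul_pos hDpos (mul_pos hU2 hU2)).ne',
            Real.log_mul hDpos.ne' (mul_pos hU2 hU2).ne', Real.log_mul hU2.ne' hU2.ne',
            Real.log_mul hApos.ne' (mul_pos hBpos (mul_pos hV2 hV2)).ne',
            Real.log_mul hBpos.ne' (mul_pos hV2 hV2).ne', Real.log_mul hV2.ne' hV2.ne'] at h'
          rw [← hlA, ← hlB, ← hlC, ← hlD, ← hlU, ← hlV] at h'
          exact mul_nonneg hs (by linarith)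
        · have key := prod_key (u := 1 + (s - s * x)) (v := 1 + (s + s * x))
            (p := s - c₃ * x) (m := s + c₃ * x) hU2.le
            (by nlinarith [mul_nonneg (show (0:ℝ) ≤ -s by linarith) hx0.le])
            (by nlinarith [mul_nonneg (mul_nonneg (show (0:ℝ) ≤ -s by linarith) hx0.le) (show (0:ℝ) ≤ -c₃ by linarith)])
          have h' := Real.log_le_log (mul_pos hApos (mul_pos hBpos (mul_pos hV2 hV2))) key
          rw [Real.log_mul hApos.ne' (mul_pos hBpos (mul_pos hV2 hV2)).ne',
            Real.log_mul hBpos.ne' (mul_pos hV2 hV2).ne', Real.log_mul hV2.ne' hV2.ne',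
            Real.log_mul hCpos.ne' (mul_pos hDpos (mul_pos hU2 hU2)).ne',
            Real.log_mul hDpos.ne' (mul_pos hU2 hU2).ne', Real.log_mul hU2.ne' hU2.ne'] at h'
          rw [← hlA, ← hlB, ← hlC, ← hlD, ← hlU, ← hlV] at h'
          linarith [mul_nonneg (show (0:ℝ) ≤ -s by linarith)
            (show (0:ℝ) ≤ (lC + lD - 2 * lV) - (lA + lB - 2 * lU) by linarith)]
      linarith [hterm1, mul_nonneg (by linarith : (0:ℝ) ≤ -c₃) hterm2]
    have heq : (lA + 1) / Real.log 2 * (s + c₃)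
        + (lB + 1) / Real.log 2 * (s - c₃)
        + ((lC + 1) / Real.log 2 * (-s - c₃)
        + (lD + 1) / Real.log 2 * (-s + c₃))
        - 2 * ((lU + 1) / Real.log 2 * s + (lV + 1) / Real.log 2 * (-s))
        = (s * ((lA + lB - 2 * lU) - (lC + lD - 2 * lV))
          + (-c₃) * ((lB - lA) - (lD - lC))) / Real.log 2 := by
      field_simp
      ring
    rw [heq]
    exact div_nonneg hM hL2.le

lemma caseC (s c c₃ : ℝ) (hcpos : 0 < c) (h1 : c₃ ≤ 0) (h2 : c ^ 2 ≤ c₃ ^ 2)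
    (h3 : 3 * |s| + |c₃| ≤ 1) (hnd : s ≠ 0 ∨ c ^ 2 < c₃ ^ 2) :
    MonotoneOn (fun z => Hy (s + s * z) (Real.sqrt (s ^ 2 + 2 * s * c₃ * z + psi c c₃ z))
      + Hy (s - s * z) (Real.sqrt (s ^ 2 - 2 * s * c₃ * z + psi c c₃ z))
      - 2 * Hy s (s * z)) (Set.Icc 0 1) := by
  have hL2 : 0 < Real.log 2 := Real.log_pos one_lt_two
  simp only [Hy, psi]
  apply monotoneOn_of_hasDerivWithinAt_nonneg (convex_Icc 0 1)
    (f' := fun x =>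
      (Real.log (1 + (s + s * x) + Real.sqrt (s ^ 2 + 2 * s * c₃ * x
          + (c ^ 2 * (1 - x ^ 2) + c₃ ^ 2 * x ^ 2))) + 1) / Real.log 2
        * (s + (2 * s * c₃ - 2 * c ^ 2 * x + 2 * c₃ ^ 2 * x)
          / (2 * Real.sqrt (s ^ 2 + 2 * s * c₃ * x + (c ^ 2 * (1 - x ^ 2) + c₃ ^ 2 * x ^ 2))))
      + (Real.log (1 + (s + s * x) - Real.sqrt (s ^ 2 + 2 * s * c₃ * x
          + (c ^ 2 * (1 - x ^ 2) + c₃ ^ 2 * x ^ 2))) + 1) / Real.log 2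
        * (s - (2 * s * c₃ - 2 * c ^ 2 * x + 2 * c₃ ^ 2 * x)
          / (2 * Real.sqrt (s ^ 2 + 2 * s * c₃ * x + (c ^ 2 * (1 - x ^ 2) + c₃ ^ 2 * x ^ 2))))
      + ((Real.log (1 + (s - s * x) + Real.sqrt (s ^ 2 - 2 * s * c₃ * x
          + (c ^ 2 * (1 - x ^ 2) + c₃ ^ 2 * x ^ 2))) + 1) / Real.log 2
        * (-s + (-(2 * s * c₃) - 2 * c ^ 2 * x + 2 * c₃ ^ 2 * x)
          / (2 * Real.sqrt (s ^ 2 - 2 * s * c₃ * x + (c ^ 2 * (1 - x ^ 2) + c₃ ^ 2 * x ^ 2))))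
      + (Real.log (1 + (s - s * x) - Real.sqrt (s ^ 2 - 2 * s * c₃ * x
          + (c ^ 2 * (1 - x ^ 2) + c₃ ^ 2 * x ^ 2))) + 1) / Real.log 2
        * (-s - (-(2 * s * c₃) - 2 * c ^ 2 * x + 2 * c₃ ^ 2 * x)
          / (2 * Real.sqrt (s ^ 2 - 2 * s * c₃ * x + (c ^ 2 * (1 - x ^ 2) + c₃ ^ 2 * x ^ 2)))))
      - 2 * ((Real.log (1 + s + s * x) + 1) / Real.log 2 * s
        + (Real.log (1 + s - s * x) + 1) / Real.log 2 * (-s)))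
  · -- continuity
    apply Continuous.continuousOn
    have hsq1 : Continuous (fun z : ℝ => Real.sqrt (s ^ 2 + 2 * s * c₃ * z
        + (c ^ 2 * (1 - z ^ 2) + c₃ ^ 2 * z ^ 2))) := Real.continuous_sqrt.comp (by fun_prop)
    have hsq2 : Continuous (fun z : ℝ => Real.sqrt (s ^ 2 - 2 * s * c₃ * z
        + (c ^ 2 * (1 - z ^ 2) + c₃ ^ 2 * z ^ 2))) := Real.continuous_sqrt.comp (by fun_prop)
    have hu : Continuous (fun z : ℝ => 1 + (s + s * z)) := by fun_prop
    have hv : Continuous (fun z : ℝ => 1 + (s - s * z)) := by fun_prop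
    have hu2 : Continuous (fun z : ℝ => 1 + s + s * z) := by fun_prop
    have hv2 : Continuous (fun z : ℝ => 1 + s - s * z) := by fun_prop
    have c1 := phi_continuous.comp (hu.add hsq1)
    have c2 := phi_continuous.comp (hu.sub hsq1)
    have c3 := phi_continuous.comp (hv.add hsq2)
    have c4 := phi_continuous.comp (hv.sub hsq2)
    have c5 := phi_continuous.comp hu2
    have c6 := phi_continuous.comp hv2
    exact ((c1.add c2).add (c3.add c4)).sub (continuous_const.mul (c5.add c6))
  · -- derivative exists
    intro x hx
    rw [interior_Icc] at hx
    obtain ⟨hx0, hx1⟩ := hx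
    have ha0 := abs_nonneg s
    have hb0 := abs_nonneg c₃
    have hs1 := neg_abs_le s
    have hs2 := le_abs_self s
    have hQp_pos : 0 < s ^ 2 + 2 * s * c₃ * x + (c ^ 2 * (1 - x ^ 2) + c₃ ^ 2 * x ^ 2) := by
      nlinarith [sq_nonneg (s + c₃ * x), mul_pos (mul_pos hcpos hcpos)
        (show (0:ℝ) < 1 - x ^ 2 by nlinarith)]
    have hQm_pos : 0 < s ^ 2 - 2 * s * c₃ * x + (c ^ 2 * (1 - x ^ 2) + c₃ ^ 2 * x ^ 2) := by
      nlinarith [sq_nonneg (s - c₃ * x), mul_pos (mul_pos hcpos hcpos)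
        (show (0:ℝ) < 1 - x ^ 2 by nlinarith)]
    have hQp_lt : s ^ 2 + 2 * s * c₃ * x + (c ^ 2 * (1 - x ^ 2) + c₃ ^ 2 * x ^ 2)
        < (1 - |s| * (1 + x)) ^ 2 := by
      have := Qlt s c c₃ x 1 hcpos h1 h2 h3 hx0 hx1 hnd (Or.inl rfl); linarith
    have hQm_lt : s ^ 2 - 2 * s * c₃ * x + (c ^ 2 * (1 - x ^ 2) + c₃ ^ 2 * x ^ 2)
        < (1 - |s| * (1 + x)) ^ 2 := by
      have := Qlt s c c₃ x (-1) hcpos h1 h2 h3 hx0 hx1 hnd (Or.inr rfl); linarith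
    have hcore : 0 < 1 - |s| * (1 + x) := by nlinarith
    have hRp_lt := (Real.sqrt_lt' hcore).2 hQp_lt
    have hRm_lt := (Real.sqrt_lt' hcore).2 hQm_lt
    have hRp0 := Real.sqrt_nonneg (s ^ 2 + 2 * s * c₃ * x + (c ^ 2 * (1 - x ^ 2) + c₃ ^ 2 * x ^ 2))
    have hRm0 := Real.sqrt_nonneg (s ^ 2 - 2 * s * c₃ * x + (c ^ 2 * (1 - x ^ 2) + c₃ ^ 2 * x ^ 2))
    have hUc : 1 - |s| * (1 + x) ≤ 1 + (s + s * x) := by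
      nlinarith [mul_nonneg (show (0:ℝ) ≤ s + |s| by linarith) hx0.le]
    have hVc : 1 - |s| * (1 + x) ≤ 1 + (s - s * x) := by
      nlinarith [mul_nonneg (show (0:ℝ) ≤ |s| - s by linarith) hx0.le]
    have hApos : 0 < 1 + (s + s * x) + Real.sqrt (s ^ 2 + 2 * s * c₃ * x
        + (c ^ 2 * (1 - x ^ 2) + c₃ ^ 2 * x ^ 2)) := by linarith
    have hBpos : 0 < 1 + (s + s * x) - Real.sqrt (s ^ 2 + 2 * s * c₃ * x
        + (c ^ 2 * (1 - x ^ 2) + c₃ ^ 2 * x ^ 2)) := by linarith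
    have hCpos : 0 < 1 + (s - s * x) + Real.sqrt (s ^ 2 - 2 * s * c₃ * x
        + (c ^ 2 * (1 - x ^ 2) + c₃ ^ 2 * x ^ 2)) := by linarith
    have hDpos : 0 < 1 + (s - s * x) - Real.sqrt (s ^ 2 - 2 * s * c₃ * x
        + (c ^ 2 * (1 - x ^ 2) + c₃ ^ 2 * x ^ 2)) := by linarith
    have hUpos : 0 < 1 + s + s * x := by linarith
    have hVpos : 0 < 1 + s - s * x := by linarith
    have hsz : HasDerivAt (fun z : ℝ => s * z) s x := by
      simpa using (hasDerivAt_id x).const_mul s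
    have hsq2d : HasDerivAt (fun z : ℝ => z ^ 2) (2 * x) x := by
      simpa using hasDerivAt_pow 2 x
    have hQp_d : HasDerivAt (fun z : ℝ => s ^ 2 + 2 * s * c₃ * z
        + (c ^ 2 * (1 - z ^ 2) + c₃ ^ 2 * z ^ 2)) (2 * s * c₃ - 2 * c ^ 2 * x + 2 * c₃ ^ 2 * x) x := by
      have ha' : HasDerivAt (fun z : ℝ => s ^ 2 + 2 * s * c₃ * z) (2 * s * c₃) x := by
        simpa using ((hasDerivAt_id x).const_mul (2 * s * c₃)).const_add (s ^ 2)
      have hb' : HasDerivAt (fun z : ℝ => c ^ 2 * (1 - z ^ 2) + c₃ ^ 2 * z ^ 2)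
          (c ^ 2 * (-(2 * x)) + c₃ ^ 2 * (2 * x)) x :=
        ((hsq2d.const_sub 1).const_mul (c ^ 2)).add (hsq2d.const_mul (c₃ ^ 2))
      have := ha'.add hb'
      exact this.congr_deriv (by ring)
    have hQm_d : HasDerivAt (fun z : ℝ => s ^ 2 - 2 * s * c₃ * z
        + (c ^ 2 * (1 - z ^ 2) + c₃ ^ 2 * z ^ 2)) (-(2 * s * c₃) - 2 * c ^ 2 * x + 2 * c₃ ^ 2 * x) x := by
      have ha' : HasDerivAt (fun z : ℝ => s ^ 2 - 2 * s * c₃ * z) (-(2 * s * c₃)) x := by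
        simpa using ((hasDerivAt_id x).const_mul (2 * s * c₃)).const_sub (s ^ 2)
      have hb' : HasDerivAt (fun z : ℝ => c ^ 2 * (1 - z ^ 2) + c₃ ^ 2 * z ^ 2)
          (c ^ 2 * (-(2 * x)) + c₃ ^ 2 * (2 * x)) x :=
        ((hsq2d.const_sub 1).const_mul (c ^ 2)).add (hsq2d.const_mul (c₃ ^ 2))
      have := ha'.add hb'
      exact this.congr_deriv (by ring)
    have hRp_d : HasDerivAt (fun z : ℝ => Real.sqrt (s ^ 2 + 2 * s * c₃ * z
        + (c ^ 2 * (1 - z ^ 2) + c₃ ^ 2 * z ^ 2)))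
        (1 / (2 * Real.sqrt (s ^ 2 + 2 * s * c₃ * x + (c ^ 2 * (1 - x ^ 2) + c₃ ^ 2 * x ^ 2)))
          * (2 * s * c₃ - 2 * c ^ 2 * x + 2 * c₃ ^ 2 * x)) x :=
      (Real.hasDerivAt_sqrt hQp_pos.ne').comp x hQp_d
    have hRm_d : HasDerivAt (fun z : ℝ => Real.sqrt (s ^ 2 - 2 * s * c₃ * z
        + (c ^ 2 * (1 - z ^ 2) + c₃ ^ 2 * z ^ 2)))
        (1 / (2 * Real.sqrt (s ^ 2 - 2 * s * c₃ * x + (c ^ 2 * (1 - x ^ 2) + c₃ ^ 2 * x ^ 2)))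
          * (-(2 * s * c₃) - 2 * c ^ 2 * x + 2 * c₃ ^ 2 * x)) x :=
      (Real.hasDerivAt_sqrt hQm_pos.ne').comp x hQm_d
    have hU_d : HasDerivAt (fun z : ℝ => 1 + (s + s * z)) s x := by
      simpa using (hsz.const_add s).const_add 1
    have hV_d : HasDerivAt (fun z : ℝ => 1 + (s - s * z)) (-s) x := by
      simpa using (hsz.const_sub s).const_add 1
    have hA_d := hU_d.add hRp_d
    have hB_d := hU_d.sub hRp_d
    have hC_d := hV_d.add hRm_d
    have hD_d := hV_d.sub hRm_d
    have hU2_d : HasDerivAt (fun z : ℝ => 1 + s + s * z) s x := by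
      simpa using hsz.const_add (1 + s)
    have hV2_d : HasDerivAt (fun z : ℝ => 1 + s - s * z) (-s) x := by
      have := hsz.const_sub (1 + s)
      convert this using 1 <;> ring
    have big := (((phi_comp hA_d hApos).add (phi_comp hB_d hBpos)).add
      ((phi_comp hC_d hCpos).add (phi_comp hD_d hDpos))).sub
      (((phi_comp hU2_d hUpos).add (phi_comp hV2_d hVpos)).const_mul 2)
    refine HasDerivAt.hasDerivWithinAt ?_
    convert big using 1
    · funext z; simp only [Pi.add_apply, Pi.sub_apply]
    · simp only [Pi.add_apply, Pi.sub_apply]; ring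
  · -- derivative nonneg
    intro x hx
    rw [interior_Icc] at hx
    obtain ⟨hx0, hx1⟩ := hx
    have ha0 := abs_nonneg s
    have hb0 := abs_nonneg c₃
    have hs1 := neg_abs_le s
    have hs2 := le_abs_self s
    have hQp_pos : 0 < s ^ 2 + 2 * s * c₃ * x + (c ^ 2 * (1 - x ^ 2) + c₃ ^ 2 * x ^ 2) := by
      nlinarith [sq_nonneg (s + c₃ * x), mul_pos (mul_pos hcpos hcpos)
        (show (0:ℝ) < 1 - x ^ 2 by nlinarith)]
    have hQm_pos : 0 < s ^ 2 - 2 * s * c₃ * x + (c ^ 2 * (1 - x ^ 2) + c₃ ^ 2 * x ^ 2) := by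
      nlinarith [sq_nonneg (s - c₃ * x), mul_pos (mul_pos hcpos hcpos)
        (show (0:ℝ) < 1 - x ^ 2 by nlinarith)]
    have hQp_lt : s ^ 2 + 2 * s * c₃ * x + (c ^ 2 * (1 - x ^ 2) + c₃ ^ 2 * x ^ 2)
        < (1 - |s| * (1 + x)) ^ 2 := by
      have := Qlt s c c₃ x 1 hcpos h1 h2 h3 hx0 hx1 hnd (Or.inl rfl); linarith
    have hQm_lt : s ^ 2 - 2 * s * c₃ * x + (c ^ 2 * (1 - x ^ 2) + c₃ ^ 2 * x ^ 2)
        < (1 - |s| * (1 + x)) ^ 2 := by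
      have := Qlt s c c₃ x (-1) hcpos h1 h2 h3 hx0 hx1 hnd (Or.inr rfl); linarith
    have hcore : 0 < 1 - |s| * (1 + x) := by nlinarith
    have hRp_lt := (Real.sqrt_lt' hcore).2 hQp_lt
    have hRm_lt := (Real.sqrt_lt' hcore).2 hQm_lt
    have hRp0 := Real.sqrt_nonneg (s ^ 2 + 2 * s * c₃ * x + (c ^ 2 * (1 - x ^ 2) + c₃ ^ 2 * x ^ 2))
    have hRm0 := Real.sqrt_nonneg (s ^ 2 - 2 * s * c₃ * x + (c ^ 2 * (1 - x ^ 2) + c₃ ^ 2 * x ^ 2))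
    have hRp_pos : 0 < Real.sqrt (s ^ 2 + 2 * s * c₃ * x + (c ^ 2 * (1 - x ^ 2) + c₃ ^ 2 * x ^ 2)) :=
      Real.sqrt_pos.2 hQp_pos
    have hRm_pos : 0 < Real.sqrt (s ^ 2 - 2 * s * c₃ * x + (c ^ 2 * (1 - x ^ 2) + c₃ ^ 2 * x ^ 2)) :=
      Real.sqrt_pos.2 hQm_pos
    have hRp_sq : (Real.sqrt (s ^ 2 + 2 * s * c₃ * x + (c ^ 2 * (1 - x ^ 2) + c₃ ^ 2 * x ^ 2))) ^ 2
        = s ^ 2 + 2 * s * c₃ * x + (c ^ 2 * (1 - x ^ 2) + c₃ ^ 2 * x ^ 2) :=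
      Real.sq_sqrt hQp_pos.le
    have hRm_sq : (Real.sqrt (s ^ 2 - 2 * s * c₃ * x + (c ^ 2 * (1 - x ^ 2) + c₃ ^ 2 * x ^ 2))) ^ 2
        = s ^ 2 - 2 * s * c₃ * x + (c ^ 2 * (1 - x ^ 2) + c₃ ^ 2 * x ^ 2) :=
      Real.sq_sqrt hQm_pos.le
    have hUc : 1 - |s| * (1 + x) ≤ 1 + (s + s * x) := by
      nlinarith [mul_nonneg (show (0:ℝ) ≤ s + |s| by linarith) hx0.le]
    have hVc : 1 - |s| * (1 + x) ≤ 1 + (s - s * x) := by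
      nlinarith [mul_nonneg (show (0:ℝ) ≤ |s| - s by linarith) hx0.le]
    have hApos : 0 < 1 + (s + s * x) + Real.sqrt (s ^ 2 + 2 * s * c₃ * x
        + (c ^ 2 * (1 - x ^ 2) + c₃ ^ 2 * x ^ 2)) := by linarith
    have hBpos : 0 < 1 + (s + s * x) - Real.sqrt (s ^ 2 + 2 * s * c₃ * x
        + (c ^ 2 * (1 - x ^ 2) + c₃ ^ 2 * x ^ 2)) := by linarith
    have hCpos : 0 < 1 + (s - s * x) + Real.sqrt (s ^ 2 - 2 * s * c₃ * x
        + (c ^ 2 * (1 - x ^ 2) + c₃ ^ 2 * x ^ 2)) := by linarith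
    have hDpos : 0 < 1 + (s - s * x) - Real.sqrt (s ^ 2 - 2 * s * c₃ * x
        + (c ^ 2 * (1 - x ^ 2) + c₃ ^ 2 * x ^ 2)) := by linarith
    have hUpos : 0 < 1 + s + s * x := by linarith
    have hVpos : 0 < 1 + s - s * x := by linarith
    have hRmU : Real.sqrt (s ^ 2 - 2 * s * c₃ * x + (c ^ 2 * (1 - x ^ 2) + c₃ ^ 2 * x ^ 2))
        < 1 + (s + s * x) := by linarith
    have hRpV : Real.sqrt (s ^ 2 + 2 * s * c₃ * x + (c ^ 2 * (1 - x ^ 2) + c₃ ^ 2 * x ^ 2))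
        < 1 + (s - s * x) := by linarith
    have hd : 0 ≤ (c₃ ^ 2 - c ^ 2) * x := mul_nonneg (by linarith) hx0.le
    rw [show (1 + s + s * x : ℝ) = 1 + (s + s * x) by ring,
      show (1 + s - s * x : ℝ) = 1 + (s - s * x) by ring]
    have hU2 : 0 < 1 + (s + s * x) := by linarith
    have hV2 : 0 < 1 + (s - s * x) := by linarith
    set Rp := Real.sqrt (s ^ 2 + 2 * s * c₃ * x + (c ^ 2 * (1 - x ^ 2) + c₃ ^ 2 * x ^ 2)) with hRpdef
    set Rm := Real.sqrt (s ^ 2 - 2 * s * c₃ * x + (c ^ 2 * (1 - x ^ 2) + c₃ ^ 2 * x ^ 2)) with hRmdef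
    set lA := Real.log (1 + (s + s * x) + Rp) with hlA
    set lB := Real.log (1 + (s + s * x) - Rp) with hlB
    set lC := Real.log (1 + (s - s * x) + Rm) with hlC
    set lD := Real.log (1 + (s - s * x) - Rm) with hlD
    set lU := Real.log (1 + (s + s * x)) with hlU
    set lV := Real.log (1 + (s - s * x)) with hlV
    have hlAB : 0 ≤ lA - lB := by
      have h0 := Real.log_le_log hBpos (by linarith only [hRp0] :
        1 + (s + s * x) - Rp ≤ 1 + (s + s * x) + Rp)
      rw [← hlA, ← hlB] at h0; linarith only [h0]
    have hlCD : 0 ≤ lC - lD := by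
      have h0 := Real.log_le_log hDpos (by linarith only [hRm0] :
        1 + (s - s * x) - Rm ≤ 1 + (s - s * x) + Rm)
      rw [← hlC, ← hlD] at h0; linarith only [h0]
    have hterm1 : 0 ≤ s * ((lA + lB - 2 * lU) - (lC + lD - 2 * lV)) := by
      rcases le_or_gt 0 s with hs | hs
      · have key := prod_key (u := 1 + (s + s * x)) (v := 1 + (s - s * x))
          (p := Rp) (m := Rm) hV2.le
          (by linarith only [mul_nonneg hs hx0.le])
          (by rw [hRp_sq, hRm_sq]
              linarith only [mul_nonneg (mul_nonneg hs hx0.le) (by linarith only [h1] : (0:ℝ) ≤ -c₃)])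
        have h' := Real.log_le_log (mul_pos hCpos (mul_pos hDpos (mul_pos hU2 hU2))) key
        rw [Real.log_mul hCpos.ne' (mul_pos hDpos (mul_pos hU2 hU2)).ne',
          Real.log_mul hDpos.ne' (mul_pos hU2 hU2).ne', Real.log_mul hU2.ne' hU2.ne',
          Real.log_mul hApos.ne' (mul_pos hBpos (mul_pos hV2 hV2)).ne',
          Real.log_mul hBpos.ne' (mul_pos hV2 hV2).ne', Real.log_mul hV2.ne' hV2.ne'] at h'
        rw [← hlA, ← hlB, ← hlC, ← hlD, ← hlU, ← hlV] at h'
        exact mul_nonneg hs (by linarith only [h'])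
      · have key := prod_key (u := 1 + (s - s * x)) (v := 1 + (s + s * x))
          (p := Rm) (m := Rp) hU2.le
          (by linarith only [mul_nonneg (by linarith only [hs.le] : (0:ℝ) ≤ -s) hx0.le])
          (by rw [hRp_sq, hRm_sq]
              linarith only [mul_nonneg (mul_nonneg (by linarith only [hs.le] : (0:ℝ) ≤ -s) hx0.le) (by linarith only [h1] : (0:ℝ) ≤ -c₃)])
        have h' := Real.log_le_log (mul_pos hApos (mul_pos hBpos (mul_pos hV2 hV2))) key
        rw [Real.log_mul hApos.ne' (mul_pos hBpos (mul_pos hV2 hV2)).ne',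
          Real.log_mul hBpos.ne' (mul_pos hV2 hV2).ne', Real.log_mul hV2.ne' hV2.ne',
          Real.log_mul hCpos.ne' (mul_pos hDpos (mul_pos hU2 hU2)).ne',
          Real.log_mul hDpos.ne' (mul_pos hU2 hU2).ne', Real.log_mul hU2.ne' hU2.ne'] at h'
        rw [← hlA, ← hlB, ← hlC, ← hlD, ← hlU, ← hlV] at h'
        linarith only [mul_nonneg (by linarith only [hs.le] : (0:ℝ) ≤ -s)
          (by linarith only [h'] : (0:ℝ) ≤ (lC + lD - 2 * lV) - (lA + lB - 2 * lU))]
    have hterm23 : 0 ≤ (s * c₃ + (c₃ ^ 2 - c ^ 2) * x) / Rp * (lA - lB)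
        + (-(s * c₃) + (c₃ ^ 2 - c ^ 2) * x) / Rm * (lC - lD) := by
      rcases le_or_gt 0 (s * c₃ + (c₃ ^ 2 - c ^ 2) * x) with hp | hp
      · rcases le_or_gt 0 (-(s * c₃) + (c₃ ^ 2 - c ^ 2) * x) with hq | hq
        · exact add_nonneg (mul_nonneg (div_nonneg hp hRp_pos.le) hlAB)
            (mul_nonneg (div_nonneg hq hRm_pos.le) hlCD)
        · have hsneg : s < 0 := by
            by_contra hcon
            push_neg at hcon
            linarith only [mul_nonneg hcon (by linarith only [h1] : (0:ℝ) ≤ -c₃), hd, hq]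
          have hQle : s ^ 2 - 2 * s * c₃ * x + (c ^ 2 * (1 - x ^ 2) + c₃ ^ 2 * x ^ 2)
              ≤ s ^ 2 + 2 * s * c₃ * x + (c ^ 2 * (1 - x ^ 2) + c₃ ^ 2 * x ^ 2) := by
            linarith only [mul_nonneg (mul_nonneg (by linarith only [hsneg.le] : (0:ℝ) ≤ -s) hx0.le)
              (by linarith only [h1] : (0:ℝ) ≤ -c₃)]
          have hRle : Rm ≤ Rp := by
            rw [hRpdef, hRmdef]; exact Real.sqrt_le_sqrt hQle
          have step1 := key_ratio hRm0 hRle hRpV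
          have step2 := log_u_mono (by linarith only [mul_nonneg (by linarith only [hsneg.le] : (0:ℝ) ≤ -s) hx0.le] :
            1 + (s + s * x) ≤ 1 + (s - s * x)) hRp0 hBpos
          have hKEY : Rp * (lC - lD) ≤ Rm * (lA - lB) := by
            rw [hlA, hlB, hlC, hlD]
            calc Rp * (Real.log (1 + (s - s * x) + Rm) - Real.log (1 + (s - s * x) - Rm))
                ≤ Rm * (Real.log (1 + (s - s * x) + Rp) - Real.log (1 + (s - s * x) - Rp)) := step1
              _ ≤ Rm * (Real.log (1 + (s + s * x) + Rp) - Real.log (1 + (s + s * x) - Rp)) := by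
                  apply mul_le_mul_of_nonneg_left _ hRm0
                  exact step2
          have heq2 : (s * c₃ + (c₃ ^ 2 - c ^ 2) * x) / Rp * (lA - lB)
              + (-(s * c₃) + (c₃ ^ 2 - c ^ 2) * x) / Rm * (lC - lD)
              = ((s * c₃ + (c₃ ^ 2 - c ^ 2) * x) * (lA - lB) * Rm
                + (-(s * c₃) + (c₃ ^ 2 - c ^ 2) * x) * (lC - lD) * Rp) / (Rp * Rm) := by
            field_simp
            try ring
          rw [heq2]
          apply div_nonneg _ (by positivity)
          have hm' : 0 < s * c₃ - (c₃ ^ 2 - c ^ 2) * x := by linarith only [hq]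
          linarith only [mul_nonneg hm'.le (sub_nonneg.2 hKEY),
            mul_nonneg (mul_nonneg hd hlAB) hRm0]
      · have hspos : 0 < s := by
          by_contra hcon
          push_neg at hcon
          linarith only [mul_nonneg (by linarith only [hcon] : (0:ℝ) ≤ -s)
            (by linarith only [h1] : (0:ℝ) ≤ -c₃), hd, hp]
        have hq : 0 ≤ -(s * c₃) + (c₃ ^ 2 - c ^ 2) * x := by
          linarith only [mul_nonneg hspos.le (by linarith only [h1] : (0:ℝ) ≤ -c₃), hd]
        have hQle : s ^ 2 + 2 * s * c₃ * x + (c ^ 2 * (1 - x ^ 2) + c₃ ^ 2 * x ^ 2)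
            ≤ s ^ 2 - 2 * s * c₃ * x + (c ^ 2 * (1 - x ^ 2) + c₃ ^ 2 * x ^ 2) := by
          linarith only [mul_nonneg (mul_nonneg hspos.le hx0.le)
            (by linarith only [h1] : (0:ℝ) ≤ -c₃)]
        have hRle : Rp ≤ Rm := by
          rw [hRpdef, hRmdef]; exact Real.sqrt_le_sqrt hQle
        have step1 := key_ratio hRp0 hRle hRmU
        have step2 := log_u_mono (by linarith only [mul_nonneg hspos.le hx0.le] :
          1 + (s - s * x) ≤ 1 + (s + s * x)) hRm0 hDpos
        have hKEY : Rm * (lA - lB) ≤ Rp * (lC - lD) := by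
          rw [hlA, hlB, hlC, hlD]
          calc Rm * (Real.log (1 + (s + s * x) + Rp) - Real.log (1 + (s + s * x) - Rp))
              ≤ Rp * (Real.log (1 + (s + s * x) + Rm) - Real.log (1 + (s + s * x) - Rm)) := step1
            _ ≤ Rp * (Real.log (1 + (s - s * x) + Rm) - Real.log (1 + (s - s * x) - Rm)) := by
                apply mul_le_mul_of_nonneg_left _ hRp0
                exact step2
        have heq2 : (s * c₃ + (c₃ ^ 2 - c ^ 2) * x) / Rp * (lA - lB)
            + (-(s * c₃) + (c₃ ^ 2 - c ^ 2) * x) / Rm * (lC - lD)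
            = ((s * c₃ + (c₃ ^ 2 - c ^ 2) * x) * (lA - lB) * Rm
              + (-(s * c₃) + (c₃ ^ 2 - c ^ 2) * x) * (lC - lD) * Rp) / (Rp * Rm) := by
          field_simp
          try ring
        rw [heq2]
        apply div_nonneg _ (by positivity)
        have hm' : 0 < -(s * c₃) - (c₃ ^ 2 - c ^ 2) * x := by linarith only [hp]
        linarith only [mul_nonneg hm'.le (sub_nonneg.2 hKEY),
          mul_nonneg (mul_nonneg hd hlCD) hRp0]
    have hfin : ((lA + 1) / Real.log 2 * (s + (2 * s * c₃ - 2 * c ^ 2 * x + 2 * c₃ ^ 2 * x) / (2 * Rp))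
        + (lB + 1) / Real.log 2 * (s - (2 * s * c₃ - 2 * c ^ 2 * x + 2 * c₃ ^ 2 * x) / (2 * Rp))
        + ((lC + 1) / Real.log 2 * (-s + (-(2 * s * c₃) - 2 * c ^ 2 * x + 2 * c₃ ^ 2 * x) / (2 * Rm))
        + (lD + 1) / Real.log 2 * (-s - (-(2 * s * c₃) - 2 * c ^ 2 * x + 2 * c₃ ^ 2 * x) / (2 * Rm)))
        - 2 * ((lU + 1) / Real.log 2 * s + (lV + 1) / Real.log 2 * (-s)))
        = (s * ((lA + lB - 2 * lU) - (lC + lD - 2 * lV))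
          + ((s * c₃ + (c₃ ^ 2 - c ^ 2) * x) / Rp * (lA - lB)
          + (-(s * c₃) + (c₃ ^ 2 - c ^ 2) * x) / Rm * (lC - lD))) / Real.log 2 := by
      field_simp
      ring
    rw [hfin]
    exact div_nonneg (by linarith only [hterm1, hterm23]) hL2.le


lemma G_mono (s c c₃ : ℝ) (hcnn : 0 ≤ c) (h1 : c₃ ≤ 0) (h2 : c ^ 2 ≤ c₃ ^ 2)
    (h3 : 3 * |s| + |c₃| ≤ 1) :
    MonotoneOn (fun z => Hy (s + s * z) (Real.sqrt (s ^ 2 + 2 * s * c₃ * z + psi c c₃ z))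
      + Hy (s - s * z) (Real.sqrt (s ^ 2 - 2 * s * c₃ * z + psi c c₃ z))
      - 2 * Hy s (s * z)) (Set.Icc 0 1) := by
  by_cases hA : s = 0 ∧ c ^ 2 = c₃ ^ 2
  · obtain ⟨hs0, hcc⟩ := hA
    subst hs0
    have hval : ∀ z : ℝ, (0:ℝ) ^ 2 + 2 * 0 * c₃ * z + psi c c₃ z = c ^ 2 := by
      intro z; simp only [psi]; rw [← hcc]; ring
    have hval2 : ∀ z : ℝ, (0:ℝ) ^ 2 - 2 * 0 * c₃ * z + psi c c₃ z = c ^ 2 := by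
      intro z; simp only [psi]; rw [← hcc]; ring
    intro x hx y hy hxy
    dsimp only
    rw [hval x, hval y, hval2 x, hval2 y]
    norm_num
  · by_cases hc0 : c = 0
    · subst hc0
      exact caseB s c₃ h1 h3
    · have hcpos : 0 < c := lt_of_le_of_ne hcnn (Ne.symm hc0)
      have hnd : s ≠ 0 ∨ c ^ 2 < c₃ ^ 2 := by
        by_cases hs : s = 0
        · right
          rcases lt_or_eq_of_le h2 with h | h
          · exact h
          · exact absurd ⟨hs, h⟩ hA
        · exact Or.inl hs
      exact caseC s c c₃ hcpos h1 h2 h3 hnd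

/-- With `c = max(|c₁|,|c₂|)`, `c₃ ≤ 0`, `c² ≤ c₃²` and `3|s|+|c₃| ≤ 1`, the function `F`
is monotone nondecreasing in each variable on `[0,1]²`; in particular `F(z₀,z₁) ≤ F(1,1)`. -/
theorem stmt_6 (s c₁ c₂ c₃ c : ℝ) (hc : c = max |c₁| |c₂|)
    (h1 : c₃ ≤ 0) (h2 : c ^ 2 ≤ c₃ ^ 2) (h3 : 3 * |s| + |c₃| ≤ 1) :
    (∀ z₁ ∈ Set.Icc (0 : ℝ) 1, MonotoneOn (fun z₀ => F6 s c c₃ z₀ z₁) (Set.Icc 0 1)) ∧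
    (∀ z₀ ∈ Set.Icc (0 : ℝ) 1, MonotoneOn (fun z₁ => F6 s c c₃ z₀ z₁) (Set.Icc 0 1)) ∧
    (∀ z₀ ∈ Set.Icc (0 : ℝ) 1, ∀ z₁ ∈ Set.Icc (0 : ℝ) 1,
      F6 s c c₃ z₀ z₁ ≤ F6 s c c₃ 1 1) := by
  have hcnn : 0 ≤ c := by rw [hc]; positivity
  have hGm := G_mono s c c₃ hcnn h1 h2 h3
  have h3' : 3 * |(-s)| + |c₃| ≤ 1 := by rwa [abs_neg]
  have hGm' := G_mono (-s) c c₃ hcnn h1 h2 h3'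
  have efun : (fun z => Hy (-s + -s * z) (Real.sqrt ((-s) ^ 2 + 2 * (-s) * c₃ * z + psi c c₃ z))
      + Hy (-s - -s * z) (Real.sqrt ((-s) ^ 2 - 2 * (-s) * c₃ * z + psi c c₃ z))
      - 2 * Hy (-s) (-s * z))
      = (fun z => Hy (-s - s * z) (Real.sqrt (s ^ 2 - 2 * s * c₃ * z + psi c c₃ z))
      + Hy (-s + s * z) (Real.sqrt (s ^ 2 + 2 * s * c₃ * z + psi c c₃ z))
      - 2 * Hy (-s) (s * z)) := by
    funext z
    rw [show (-s + -s * z : ℝ) = -s - s * z by ring,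
      show ((-s : ℝ)) ^ 2 + 2 * (-s) * c₃ * z + psi c c₃ z
        = s ^ 2 - 2 * s * c₃ * z + psi c c₃ z by ring,
      show (-s - -s * z : ℝ) = -s + s * z by ring,
      show ((-s : ℝ)) ^ 2 - 2 * (-s) * c₃ * z + psi c c₃ z
        = s ^ 2 + 2 * s * c₃ * z + psi c c₃ z by ring,
      show (-s * z : ℝ) = -(s * z) by ring, Hy_even]
  rw [efun] at hGm'
  have part1 : ∀ z₁ ∈ Set.Icc (0 : ℝ) 1, MonotoneOn (fun z₀ => F6 s c c₃ z₀ z₁) (Set.Icc 0 1) := by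
    intro z₁ _ x hx y hy hxy
    have h := hGm hx hy hxy
    dsimp only at h ⊢
    simp only [F6]
    linarith
  have part2 : ∀ z₀ ∈ Set.Icc (0 : ℝ) 1, MonotoneOn (fun z₁ => F6 s c c₃ z₀ z₁) (Set.Icc 0 1) := by
    intro z₀ _ x hx y hy hxy
    have h := hGm' hx hy hxy
    dsimp only at h ⊢
    simp only [F6]
    linarith
  refine ⟨part1, part2, ?_⟩
  intro z₀ hz₀ z₁ hz₁
  have h1mem : (1 : ℝ) ∈ Set.Icc (0 : ℝ) 1 := by norm_num
  calc F6 s c c₃ z₀ z₁ ≤ F6 s c c₃ 1 z₁ := part1 z₁ hz₁ hz₀ h1mem hz₀.2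
    _ ≤ F6 s c c₃ 1 1 := part2 1 h1mem hz₁ h1mem hz₁.2
end

section
/- Let c₁, c₂, c₃ be real numbers and let ρ = (1/8)·(I₈ + c₁·σ₁⊗σ₁⊗σ₁ + c₂·σ₂⊗σ₂⊗σ₂ + c₃·σ₃⊗σ₃⊗σ₃) as an 8×8 complex matrix. Then ρ is Hermitian and its characteristic polynomial is (X − (1+r)/8)⁴·(X − (1−r)/8)⁴, where r = √(c₁²+c₂²+c₃²); equivalently, the eigenvalues of ρ are (1+r)/8 and (1−r)/8, each with multiplicity 4. -/
open Kronecker Polynomial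

/-- Pauli matrix σ₁. -/
def pauli1 : Matrix (Fin 2) (Fin 2) ℂ := !![0, 1; 1, 0]
/-- Pauli matrix σ₂. -/
def pauli2 : Matrix (Fin 2) (Fin 2) ℂ := !![0, -Complex.I; Complex.I, 0]
/-- Pauli matrix σ₃. -/
def pauli3 : Matrix (Fin 2) (Fin 2) ℂ := !![1, 0; 0, -1]

open Matrix

lemma charmatrix_blockDiagonal' {o n R : Type*} [DecidableEq o] [DecidableEq n] [Fintype n]
    [Fintype o] [CommRing R] (B : o → Matrix n n R) :
    charmatrix (blockDiagonal B) = blockDiagonal (fun k => charmatrix (B k)) := by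
  ext ⟨i, k⟩ ⟨j, k'⟩ : 1
  simp only [charmatrix_apply, blockDiagonal_apply, diagonal_apply, Prod.mk.injEq]
  by_cases h : k = k'
  · subst h
    by_cases hij : i = j <;> simp [hij]
  · simp [h]

lemma charpoly_blockDiagonal' {o n R : Type*} [DecidableEq o] [DecidableEq n] [Fintype n]
    [Fintype o] [CommRing R] (B : o → Matrix n n R) :
    (blockDiagonal B).charpoly = ∏ k, (B k).charpoly := by
  rw [Matrix.charpoly, charmatrix_blockDiagonal', det_blockDiagonal]
  rfl

lemma charpoly_fin_two' (M : Matrix (Fin 2) (Fin 2) ℂ) :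
    M.charpoly = (X - C (M 0 0)) * (X - C (M 1 1)) - C (M 0 1) * C (M 1 0) := by
  rw [Matrix.charpoly, det_fin_two, charmatrix_apply_eq, charmatrix_apply_eq,
    charmatrix_apply_ne _ _ _ (by decide), charmatrix_apply_ne _ _ _ (by decide)]
  ring

lemma quad_eq' (u v w₁ w₂ a b : ℂ) (h1 : u + v = a + b) (h2 : u * v - w₁ * w₂ = a * b) :
    (X - C u) * (X - C v) - C w₁ * C w₂ = (X - C a) * (X - C b) := by
  have e1 : C u + C v = C a + C b := by rw [← C_add, h1, C_add]
  have e2 : C u * C v - C w₁ * C w₂ = C a * C b := by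
    rw [← C_mul, ← C_mul, ← C_sub, h2, C_mul]
  linear_combination (-(X : ℂ[X])) * e1 + e2

def pairEquiv : (Fin 2 × Fin 2 × Fin 2) ≃ (Fin 2) × (Fin 2 × Fin 2) where
  toFun x := (x.1, if x.1 = 0 then (x.2.1, x.2.2) else (1 - x.2.1, 1 - x.2.2))
  invFun y := (y.1, if y.1 = 0 then (y.2.1, y.2.2) else (1 - y.2.1, 1 - y.2.2))
  left_inv x := by revert x; decide
  right_inv y := by revert y; decide

noncomputable def blk (c₁ c₂ c₃ : ℝ) : (Fin 2 × Fin 2) → Matrix (Fin 2) (Fin 2) ℂ :=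
  fun o => if o.1 = o.2 then
    (1/8 : ℂ) • !![1 + (c₃ : ℂ), (c₁ : ℂ) + Complex.I * c₂; (c₁ : ℂ) - Complex.I * c₂, 1 - (c₃ : ℂ)]
  else
    (1/8 : ℂ) • !![1 - (c₃ : ℂ), (c₁ : ℂ) - Complex.I * c₂; (c₁ : ℂ) + Complex.I * c₂, 1 + (c₃ : ℂ)]

lemma reindex_rho (c₁ c₂ c₃ : ℝ) :
    (reindex pairEquiv pairEquiv
      ((1 / 8 : ℂ) • (1 + (c₁ : ℂ) • (pauli1 ⊗ₖ (pauli1 ⊗ₖ pauli1))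
        + (c₂ : ℂ) • (pauli2 ⊗ₖ (pauli2 ⊗ₖ pauli2))
        + (c₃ : ℂ) • (pauli3 ⊗ₖ (pauli3 ⊗ₖ pauli3))))) = blockDiagonal (blk c₁ c₂ c₃) := by
  ext ⟨a, o⟩ ⟨b, o'⟩ : 1
  simp only [reindex_apply, submatrix_apply, blockDiagonal_apply, blk, pairEquiv,
    Equiv.symm, Equiv.coe_fn_mk, kroneckerMap_apply, pauli1, pauli2, pauli3,
    Matrix.add_apply, Matrix.smul_apply, Matrix.one_apply, smul_eq_mul]
  fin_cases a <;> fin_cases b <;> fin_cases o <;> fin_cases o' <;>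
    simp [Matrix.one_apply, Prod.ext_iff] <;> ring

/-- The state `ρ = (1/8)(I₈ + c₁σ₁⊗σ₁⊗σ₁ + c₂σ₂⊗σ₂⊗σ₂ + c₃σ₃⊗σ₃⊗σ₃)` is Hermitian with
characteristic polynomial `(X−(1+r)/8)⁴(X−(1−r)/8)⁴`, `r = √(c₁²+c₂²+c₃²)`. -/
theorem stmt_10 (c₁ c₂ c₃ : ℝ)
    (ρ : Matrix (Fin 2 × Fin 2 × Fin 2) (Fin 2 × Fin 2 × Fin 2) ℂ)
    (hρ : ρ = (1 / 8 : ℂ) • (1 + (c₁ : ℂ) • (pauli1 ⊗ₖ (pauli1 ⊗ₖ pauli1))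
        + (c₂ : ℂ) • (pauli2 ⊗ₖ (pauli2 ⊗ₖ pauli2))
        + (c₃ : ℂ) • (pauli3 ⊗ₖ (pauli3 ⊗ₖ pauli3))))
    (r : ℝ) (hr : r = Real.sqrt (c₁ ^ 2 + c₂ ^ 2 + c₃ ^ 2)) :
    ρ.IsHermitian ∧
    ρ.charpoly = (X - C (((1 + r) / 8 : ℝ) : ℂ)) ^ 4 * (X - C (((1 - r) / 8 : ℝ) : ℂ)) ^ 4 := by
  have hr2 : (r : ℂ) ^ 2 = (c₁ : ℂ) ^ 2 + (c₂ : ℂ) ^ 2 + (c₃ : ℂ) ^ 2 := by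
    have : r ^ 2 = c₁ ^ 2 + c₂ ^ 2 + c₃ ^ 2 := by
      rw [hr]; exact Real.sq_sqrt (by positivity)
    exact_mod_cast congrArg (Complex.ofReal) this
  constructor
  · rw [Matrix.IsHermitian, hρ]
    ext ⟨a, b, c⟩ ⟨d, e, f⟩ : 1
    simp only [conjTranspose_apply, kroneckerMap_apply, pauli1, pauli2, pauli3,
      Matrix.add_apply, Matrix.smul_apply, Matrix.one_apply, smul_eq_mul]
    fin_cases a <;> fin_cases b <;> fin_cases c <;> fin_cases d <;> fin_cases e <;> fin_cases f <;>
      simp [Matrix.one_apply, Prod.ext_iff, map_add, _root_.map_mul, Complex.conj_ofReal] <;> ring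
  · have key : ρ.charpoly = (blockDiagonal (blk c₁ c₂ c₃)).charpoly := by
      rw [← reindex_rho c₁ c₂ c₃, Matrix.charpoly_reindex, hρ]
    set a : ℂ := (((1 + r) / 8 : ℝ) : ℂ) with ha
    set b : ℂ := (((1 - r) / 8 : ℝ) : ℂ) with hb
    have hab1 : (a + b : ℂ) = 1 / 4 := by rw [ha, hb]; push_cast; ring
    have hab2 : (a * b : ℂ) = (1 - ((c₁:ℂ)^2 + (c₂:ℂ)^2 + (c₃:ℂ)^2)) / 64 := by
      rw [ha, hb, ← hr2]; push_cast; ring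
    have hq : ∀ o : Fin 2 × Fin 2, (blk c₁ c₂ c₃ o).charpoly = (X - C a) * (X - C b) := by
      intro o
      rw [charpoly_fin_two']
      by_cases h : o.1 = o.2 <;>
        simp only [blk, h, if_true, if_false, Matrix.smul_apply, Matrix.cons_val_zero,
          Matrix.cons_val_one, Matrix.head_cons, Matrix.head_fin_const, smul_eq_mul,
          Matrix.cons_val', Matrix.empty_val', Matrix.of_apply, Matrix.cons_val_fin_one] <;>
      · apply quad_eq'
        · rw [hab1]; ring
        · rw [hab2]; linear_combination ((c₂:ℂ)^2/64) * Complex.I_sq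
    rw [key, charpoly_blockDiagonal', Finset.prod_congr rfl (fun o _ => hq o),
      Finset.prod_const]
    have : (Finset.univ : Finset (Fin 2 × Fin 2)).card = 4 := by decide
    rw [this, mul_pow]
end

section
/- Let N ≥ 2 be a natural number and s, c₃ real numbers. For u = (u₁,…,u_N) ∈ {0,1}^N define f(u) = 1 + s·Σ_{k=1}^{N−1}(−1)^{u_k} + (−1)^{u_N}·|s + (−1)^{u₁+⋯+u_{N−1}}·c₃|. Then (1/2^N)·Σ_{u∈{0,1}^N} f(u)·log₂ f(u) = (1/2^N)·[ Σ_{k≥0, 2k≤N−1} C(N−1,2k)·H_{(N−1−4k)s}(|s+c₃|) + Σ_{k≥0, 2k+1≤N−1} C(N−1,2k+1)·H_{(N−3−4k)s}(|s−c₃|) ], where C(n,j) denotes the binomial coefficient. (This single identity covers the paper's four cases N = 4n, 4n+1, 4n+2, 4n+3.) -/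
lemma sum_snoc_aux (n : ℕ) {M : Type*} [AddCommMonoid M] (h : (Fin (n+1) → Fin 2) → M) :
    ∑ u : Fin (n+1) → Fin 2, h u = ∑ v : Fin n → Fin 2, ∑ b : Fin 2, h (Fin.snoc v b) := by
  rw [← Fintype.sum_prod_type']
  exact (Fintype.sum_equiv ((Equiv.prodComm _ _).trans (Fin.snocEquiv (fun _ => Fin 2)))
    (fun p => h (Fin.snoc p.1 p.2)) h (fun p => by simp [Fin.snocEquiv])).symm

lemma count_aux (n : ℕ) (G : ℕ → ℝ) :
    ∑ v : Fin n → Fin 2, G (∑ i, (v i : ℕ))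
      = ∑ m ∈ Finset.range (n+1), (n.choose m : ℝ) * G m := by
  induction n generalizing G with
  | zero => simp
  | succ n ih =>
    rw [sum_snoc_aux]
    have h1 : ∀ (v : Fin n → Fin 2) (b : Fin 2),
        (∑ i, ((Fin.snoc v b : Fin (n+1) → Fin 2) i : ℕ)) = (∑ i, (v i : ℕ)) + (b : ℕ) := by
      intro v b
      rw [Fin.sum_univ_castSucc]
      simp
    have h2 : ∀ v : Fin n → Fin 2,
        ∑ b : Fin 2, G (∑ i, ((Fin.snoc v b : Fin (n+1) → Fin 2) i : ℕ))
          = G (∑ i, (v i : ℕ)) + G ((∑ i, (v i : ℕ)) + 1) := by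
      intro v
      rw [Fin.sum_univ_two, h1, h1]
      simp
    rw [Finset.sum_congr rfl (fun v _ => h2 v), Finset.sum_add_distrib, ih, ih (fun m => G (m+1))]
    rw [Finset.sum_range_succ' (fun m => ((n+1).choose m : ℝ) * G m) (n+1)]
    have h3 : ∑ m ∈ Finset.range (n+1), (((n+1).choose (m+1) : ℝ)) * G (m+1)
        = ∑ m ∈ Finset.range (n+1), ((n.choose m : ℝ) * G (m+1) + (n.choose (m+1) : ℝ) * G (m+1)) := by
      refine Finset.sum_congr rfl fun m _ => ?_
      rw [Nat.choose_succ_succ]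
      push_cast
      ring
    rw [h3, Finset.sum_add_distrib]
    have h4 : ∑ m ∈ Finset.range (n+1), (n.choose (m+1) : ℝ) * G (m+1)
        = ∑ m ∈ Finset.range (n+1), (n.choose m : ℝ) * G m - (n.choose 0 : ℝ) * G 0 := by
      have h6 := Finset.sum_range_succ' (fun m => (n.choose m : ℝ) * G m) n
      have h5 : ∑ m ∈ Finset.range (n+1), (n.choose (m+1):ℝ) * G (m+1)
          = ∑ m ∈ Finset.range n, (n.choose (m+1):ℝ) * G (m+1) := by
        rw [Finset.sum_range_succ]
        simp
      rw [h5]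
      linarith [h6]
    rw [h4]
    simp
    ring

lemma filter_sum_aux (n : ℕ) {M : Type*} [AddCommMonoid M] (g : Fin (n+1) → M) :
    ∑ k ∈ Finset.univ.filter (fun k : Fin (n+1) => (k:ℕ) < n), g k
      = ∑ i : Fin n, g i.castSucc := by
  have himg : Finset.univ.filter (fun k : Fin (n+1) => (k:ℕ) < n)
      = Finset.univ.image (Fin.castSucc : Fin n → Fin (n+1)) := by
    ext k
    simp only [Finset.mem_filter, Finset.mem_image, Finset.mem_univ, true_and]
    constructor
    · intro hk
      exact ⟨⟨(k:ℕ), hk⟩, by ext; simp⟩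
    · rintro ⟨i, rfl⟩
      simp [i.is_lt]
  rw [himg, Finset.sum_image (fun a _ b _ h => Fin.castSucc_injective n h)]

/-- For `u ∈ {0,1}^N` let
`f(u) = 1 + s·Σ_{k=1}^{N−1}(−1)^{u_k} + (−1)^{u_N}·|s + (−1)^{u₁+⋯+u_{N−1}}c₃|`. Then
`(1/2^N)·Σ_u f(u)log₂ f(u)
  = (1/2^N)[Σ_{2k≤N−1} C(N−1,2k)H_{(N−1−4k)s}(|s+c₃|)
     + Σ_{2k+1≤N−1} C(N−1,2k+1)H_{(N−3−4k)s}(|s−c₃|)]`. -/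
theorem stmt_13 (N : ℕ) (hN : 2 ≤ N) (s c₃ : ℝ)
    (f : (Fin N → Fin 2) → ℝ)
    (hf : ∀ u, f u = 1
        + s * ∑ k ∈ Finset.univ.filter (fun k : Fin N => (k : ℕ) < N - 1), (-1 : ℝ) ^ (u k : ℕ)
        + (-1 : ℝ) ^ ((u ⟨N - 1, by omega⟩ : Fin 2) : ℕ)
          * |s + (-1 : ℝ) ^ (∑ k ∈ Finset.univ.filter (fun k : Fin N => (k : ℕ) < N - 1),
              ((u k : Fin 2) : ℕ)) * c₃|) :
    (1 / 2 ^ N : ℝ) * ∑ u : Fin N → Fin 2, f u * Real.logb 2 (f u)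
      = (1 / 2 ^ N : ℝ) *
        ((∑ k ∈ (Finset.range N).filter (fun k => 2 * k ≤ N - 1),
            ((N - 1).choose (2 * k) : ℝ) * Hy (((N : ℝ) - 1 - 4 * k) * s) |s + c₃|)
         + ∑ k ∈ (Finset.range N).filter (fun k => 2 * k + 1 ≤ N - 1),
            ((N - 1).choose (2 * k + 1) : ℝ) * Hy (((N : ℝ) - 3 - 4 * k) * s) |s - c₃|) := by
  obtain ⟨n, rfl⟩ : ∃ n, N = n + 1 := ⟨N - 1, by omega⟩
  congr 1
  have hlast : ∀ (h : n + 1 - 1 < n + 1), (⟨n + 1 - 1, h⟩ : Fin (n+1)) = Fin.last n := by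
    intro h; ext; simp
  have hfilter : ∀ k : Fin (n+1), ((k:ℕ) < n + 1 - 1) = ((k:ℕ) < n) := by
    intro k; simp
  -- value of f on snoc
  have hfs : ∀ (v : Fin n → Fin 2) (b : Fin 2),
      f (Fin.snoc v b) = 1 + ((n:ℝ) - 2 * (∑ i, (v i : ℕ))) * s
        + (-1:ℝ)^(b:ℕ) * |s + (-1:ℝ)^(∑ i, (v i : ℕ)) * c₃| := by
    intro v b
    rw [hf, hlast, Fin.snoc_last]
    simp only [hfilter]
    rw [filter_sum_aux n (fun k => (-1:ℝ)^((Fin.snoc v b : Fin (n+1) → Fin 2) k : ℕ)),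
        filter_sum_aux n (fun k => (((Fin.snoc v b : Fin (n+1) → Fin 2) k : Fin 2) : ℕ))]
    simp only [Fin.snoc_castSucc]
    have hsum : ∑ i : Fin n, (-1:ℝ)^(v i : ℕ) = (n:ℝ) - 2 * (∑ i, (v i : ℕ)) := by
      have hpt : ∀ i : Fin n, (-1:ℝ)^(v i : ℕ) = 1 - 2 * ((v i : ℕ) : ℝ) := by
        intro i
        have h2 : (v i : ℕ) = 0 ∨ (v i : ℕ) = 1 := by omega
        rcases h2 with h | h <;> rw [h] <;> norm_num
      rw [Finset.sum_congr rfl (fun i _ => hpt i), Finset.sum_sub_distrib]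
      push_cast
      simp [Finset.mul_sum]
    rw [hsum]
    ring_nf
  -- main computation
  rw [sum_snoc_aux]
  have hb : ∀ v : Fin n → Fin 2,
      ∑ b : Fin 2, f (Fin.snoc v b) * Real.logb 2 (f (Fin.snoc v b))
        = Hy (((n:ℝ) - 2 * (∑ i, (v i : ℕ))) * s) |s + (-1:ℝ)^(∑ i, (v i : ℕ)) * c₃| := by
    intro v
    rw [Fin.sum_univ_two, hfs, hfs, Hy]
    norm_num
    simp only [← sub_eq_add_neg]
  rw [Finset.sum_congr rfl (fun v _ => hb v),
      count_aux n (fun m => Hy (((n:ℝ) - 2 * m) * s) |s + (-1:ℝ)^m * c₃|)]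
  rw [← Finset.sum_filter_add_sum_filter_not (Finset.range (n+1)) (fun m => Even m)]
  congr 1
  · refine Finset.sum_nbij' (fun m => m / 2) (fun k => 2 * k) ?_ ?_ ?_ ?_ ?_
    · intro m hm
      simp only [Finset.mem_filter, Finset.mem_range, Nat.even_iff] at hm ⊢
      omega
    · intro k hk
      simp only [Finset.mem_filter, Finset.mem_range, Nat.even_iff] at hk ⊢
      omega
    · intro m hm
      simp only [Finset.mem_filter, Finset.mem_range, Nat.even_iff] at hm
      show 2 * (m / 2) = m
      omega
    · intro k hk
      show (2 * k) / 2 = k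
      omega
    · intro m hm
      simp only [Finset.mem_filter, Finset.mem_range, Nat.even_iff] at hm
      obtain ⟨k, rfl⟩ : ∃ k, m = 2 * k := ⟨m / 2, by omega⟩
      have h2k : 2 * k / 2 = k := by omega
      simp only [h2k, Nat.add_sub_cancel]
      have hpow : (-1:ℝ)^(2*k) = 1 := by rw [pow_mul]; norm_num
      rw [hpow, one_mul]
      congr 2
      push_cast
      ring
  · refine Finset.sum_nbij' (fun m => m / 2) (fun k => 2 * k + 1) ?_ ?_ ?_ ?_ ?_
    · intro m hm
      simp only [Finset.mem_filter, Finset.mem_range, Nat.even_iff] at hm ⊢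
      omega
    · intro k hk
      simp only [Finset.mem_filter, Finset.mem_range, Nat.even_iff] at hk ⊢
      omega
    · intro m hm
      simp only [Finset.mem_filter, Finset.mem_range, Nat.even_iff] at hm
      show 2 * (m / 2) + 1 = m
      omega
    · intro k hk
      show (2 * k + 1) / 2 = k
      omega
    · intro m hm
      simp only [Finset.mem_filter, Finset.mem_range, Nat.even_iff] at hm
      obtain ⟨k, rfl⟩ : ∃ k, m = 2 * k + 1 := ⟨m / 2, by omega⟩
      have h2k : (2 * k + 1) / 2 = k := by omega
      simp only [h2k, Nat.add_sub_cancel]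
      have hpow : (-1:ℝ)^(2*k+1) = -1 := by rw [pow_succ, pow_mul]; norm_num
      rw [hpow]
      have habs : s + (-1) * c₃ = s - c₃ := by ring
      rw [habs]
      congr 2
      push_cast
      ring
end

section
/- Let s, c₁, c₂, c₃, t, y₁, y₂, y₃ be real numbers with t²+y₁²+y₂²+y₃² = 1, let V = t·I₂ + i(y₁σ₁+y₂σ₂+y₃σ₃), Π₀ = [[1,0],[0,0]], Π₁ = [[0,0],[0,1]], and P_j = V Π_j V† for j ∈ {0,1}. Let ρ = (1/8)·(I₈ + Σ_{i=1}^3 c_i·σ_i⊗σ_i⊗σ_i + s·σ₃⊗I₂⊗I₂ + s·I₂⊗σ₃⊗I₂ + s·I₂⊗I₂⊗σ₃), and set z₁ = 2(−t y₂ + y₁y₃), z₂ = 2(t y₁ + y₂y₃), z₃ = t² + y₃² − y₁² − y₂². Then for j ∈ {0,1}: (P_j⊗I₄)·ρ·(P_j⊗I₄) = (1/8)·P_j ⊗ [ (1+(−1)ʲ s z₃)·I₄ + (−1)ʲ·Σ_{i=1}^3 c_i z_i·σ_i⊗σ_i + s·σ₃⊗I₂ + s·I₂⊗σ₃ ], and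 the trace of (P_j⊗I₄)·ρ·(P_j⊗I₄) equals (1/2)·(1+(−1)ʲ s z₃). -/
open Kronecker Matrix

/-- `Π₀ = [[1,0],[0,0]]`, `Π₁ = [[0,0],[0,1]]`. -/
def proj (j : Fin 2) : Matrix (Fin 2) (Fin 2) ℂ :=
  Matrix.diagonal fun i => if i = j then 1 else 0

/-- Effect of the von Neumann measurement `{P_j = V Π_j V†}` on the first qubit of the
three-qubit state `ρ`: both the post-measurement (unnormalized) state and its trace. -/
theorem stmt_14 (s c₁ c₂ c₃ t y₁ y₂ y₃ : ℝ)
    (hunit : t ^ 2 + y₁ ^ 2 + y₂ ^ 2 + y₃ ^ 2 = 1)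
    (V : Matrix (Fin 2) (Fin 2) ℂ)
    (hV : V = (t : ℂ) • 1 + Complex.I • ((y₁ : ℂ) • pauli1 + (y₂ : ℂ) • pauli2
        + (y₃ : ℂ) • pauli3))
    (P : Fin 2 → Matrix (Fin 2) (Fin 2) ℂ) (hP : ∀ j, P j = V * proj j * Vᴴ)
    (ρ : Matrix (Fin 2 × Fin 2 × Fin 2) (Fin 2 × Fin 2 × Fin 2) ℂ)
    (hρ : ρ = (1 / 8 : ℂ) • (1 + (c₁ : ℂ) • (pauli1 ⊗ₖ (pauli1 ⊗ₖ pauli1))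
        + (c₂ : ℂ) • (pauli2 ⊗ₖ (pauli2 ⊗ₖ pauli2))
        + (c₃ : ℂ) • (pauli3 ⊗ₖ (pauli3 ⊗ₖ pauli3))
        + (s : ℂ) • (pauli3 ⊗ₖ ((1 : Matrix (Fin 2) (Fin 2) ℂ) ⊗ₖ (1 : Matrix (Fin 2) (Fin 2) ℂ)))
        + (s : ℂ) • ((1 : Matrix (Fin 2) (Fin 2) ℂ) ⊗ₖ (pauli3 ⊗ₖ (1 : Matrix (Fin 2) (Fin 2) ℂ)))
        + (s : ℂ) • ((1 : Matrix (Fin 2) (Fin 2) ℂ) ⊗ₖ ((1 : Matrix (Fin 2) (Fin 2) ℂ) ⊗ₖ pauli3))))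
    (z₁ z₂ z₃ : ℝ)
    (hz₁ : z₁ = 2 * (-(t * y₂) + y₁ * y₃))
    (hz₂ : z₂ = 2 * (t * y₁ + y₂ * y₃))
    (hz₃ : z₃ = t ^ 2 + y₃ ^ 2 - y₁ ^ 2 - y₂ ^ 2) :
    ∀ j : Fin 2,
      (P j ⊗ₖ (1 : Matrix (Fin 2 × Fin 2) (Fin 2 × Fin 2) ℂ)) * ρ
          * (P j ⊗ₖ (1 : Matrix (Fin 2 × Fin 2) (Fin 2 × Fin 2) ℂ))
        = (1 / 8 : ℂ) • (P j ⊗ₖ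
            (((1 + (-1 : ℝ) ^ (j : ℕ) * s * z₃ : ℝ) : ℂ) • (1 : Matrix (Fin 2 × Fin 2) (Fin 2 × Fin 2) ℂ)
              + (((-1 : ℝ) ^ (j : ℕ) * (c₁ * z₁) : ℝ) : ℂ) • (pauli1 ⊗ₖ pauli1)
              + (((-1 : ℝ) ^ (j : ℕ) * (c₂ * z₂) : ℝ) : ℂ) • (pauli2 ⊗ₖ pauli2)
              + (((-1 : ℝ) ^ (j : ℕ) * (c₃ * z₃) : ℝ) : ℂ) • (pauli3 ⊗ₖ pauli3)
              + (s : ℂ) • (pauli3 ⊗ₖ (1 : Matrix (Fin 2) (Fin 2) ℂ))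
              + (s : ℂ) • ((1 : Matrix (Fin 2) (Fin 2) ℂ) ⊗ₖ pauli3))) ∧
      Matrix.trace ((P j ⊗ₖ (1 : Matrix (Fin 2 × Fin 2) (Fin 2 × Fin 2) ℂ)) * ρ
          * (P j ⊗ₖ (1 : Matrix (Fin 2 × Fin 2) (Fin 2 × Fin 2) ℂ)))
        = (((1 / 2) * (1 + (-1 : ℝ) ^ (j : ℕ) * s * z₃) : ℝ) : ℂ) := by

  have hC : (t:ℂ)^2 + (y₁:ℂ)^2 + (y₂:ℂ)^2 + (y₃:ℂ)^2 = 1 := by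
    exact_mod_cast congrArg (Complex.ofReal) hunit
  have hVe : V = !![(t:ℂ) + Complex.I*y₃, (y₂:ℂ) + Complex.I*y₁;
      -(y₂:ℂ) + Complex.I*y₁, (t:ℂ) - Complex.I*y₃] := by
    subst hV
    ext i k
    fin_cases i <;> fin_cases k <;>
      simp [pauli1, pauli2, pauli3, Matrix.one_apply, Complex.ext_iff] <;> ring
  have hVH : Vᴴ = !![(t:ℂ) - Complex.I*y₃, -(y₂:ℂ) - Complex.I*y₁;
      (y₂:ℂ) - Complex.I*y₁, (t:ℂ) + Complex.I*y₃] := by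
    rw [hVe]
    ext i k
    fin_cases i <;> fin_cases k <;>
      simp [Matrix.conjTranspose_apply, Complex.conj_ofReal] <;> ring
  have hU : V * Vᴴ = 1 := by
    rw [hVH, hVe]
    ext i k
    fin_cases i <;> fin_cases k <;>
      simp [Matrix.mul_apply, Fin.sum_univ_two, Matrix.one_apply, Complex.ext_iff,
        ← Complex.ofReal_pow] <;>
      first
        | trivial
        | ring1
        | linear_combination hunit
        | linear_combination -hunit
        | (constructor <;>
            first | trivial | ring1 | linear_combination hunit | linear_combination -hunit)
  have hU' : Vᴴ * V = 1 := mul_eq_one_comm.mp hU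
  have hprojj : ∀ j : Fin 2, proj j * proj j = proj j := by
    intro j
    have h : ∀ i : Fin 2, ((if i = j then (1:ℂ) else 0) * (if i = j then 1 else 0))
        = (if i = j then 1 else 0) := by
      intro i; by_cases h : i = j <;> simp [h]
    simp only [proj, Matrix.diagonal_mul_diagonal, h]
  have sandwich : ∀ (A : Matrix (Fin 2) (Fin 2) ℂ) (j : Fin 2),
      proj j * A * proj j = (A j j) • proj j := by
    intro A j
    ext a b
    fin_cases a <;> fin_cases b <;> fin_cases j <;>
      simp [proj, Matrix.mul_apply, Matrix.diagonal_apply, Fin.sum_univ_two]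
  have key : ∀ (j : Fin 2) (A : Matrix (Fin 2) (Fin 2) ℂ),
      P j * A * P j = ((Vᴴ * A * V) j j) • P j := by
    intro j A
    rw [hP j]
    calc V * proj j * Vᴴ * A * (V * proj j * Vᴴ)
        = V * (proj j * (Vᴴ * A * V) * proj j) * Vᴴ := by
          simp only [Matrix.mul_assoc]
      _ = V * (((Vᴴ * A * V) j j) • proj j) * Vᴴ := by rw [sandwich]
      _ = ((Vᴴ * A * V) j j) • (V * proj j * Vᴴ) := by
          simp only [Matrix.mul_smul, Matrix.smul_mul]
  have hPP : ∀ j : Fin 2, P j * P j = P j := by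
    intro j
    rw [hP j]
    calc V * proj j * Vᴴ * (V * proj j * Vᴴ)
        = V * (proj j * (Vᴴ * V * (proj j * Vᴴ))) := by simp only [Matrix.mul_assoc]
      _ = V * proj j * Vᴴ := by rw [hU']; simp only [Matrix.one_mul, ← Matrix.mul_assoc, hprojj]
  have hw1 : ∀ j : Fin 2, (Vᴴ * pauli1 * V) j j = (((-1:ℝ)^(j:ℕ) * z₁ : ℝ) : ℂ) := by
    intro j
    fin_cases j <;>
      simp [hVe, hVH, pauli1, Matrix.mul_apply, Fin.sum_univ_two, hz₁,
        Complex.ext_iff, ← Complex.ofReal_pow] <;>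
      first
        | trivial
        | ring1
        | linear_combination hunit
        | linear_combination -hunit
        | (constructor <;>
            first | trivial | ring1 | linear_combination hunit | linear_combination -hunit)
  have hw2 : ∀ j : Fin 2, (Vᴴ * pauli2 * V) j j = (((-1:ℝ)^(j:ℕ) * z₂ : ℝ) : ℂ) := by
    intro j
    fin_cases j <;>
      simp [hVe, hVH, pauli2, Matrix.mul_apply, Fin.sum_univ_two, hz₂,
        Complex.ext_iff, ← Complex.ofReal_pow] <;>
      first
        | trivial
        | ring1
        | linear_combination hunit
        | linear_combination -hunit
        | (constructor <;>
            first | trivial | ring1 | linear_combination hunit | linear_combination -hunit)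
  have hw3 : ∀ j : Fin 2, (Vᴴ * pauli3 * V) j j = (((-1:ℝ)^(j:ℕ) * z₃ : ℝ) : ℂ) := by
    intro j
    fin_cases j <;>
      simp [hVe, hVH, pauli3, Matrix.mul_apply, Fin.sum_univ_two, hz₃,
        Complex.ext_iff, ← Complex.ofReal_pow] <;>
      first
        | trivial
        | ring1
        | linear_combination hunit
        | linear_combination -hunit
        | (constructor <;>
            first | trivial | ring1 | linear_combination hunit | linear_combination -hunit)
  have hw0 : ∀ j : Fin 2, (Vᴴ * (1 : Matrix (Fin 2) (Fin 2) ℂ) * V) j j = 1 := by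
    intro j
    rw [Matrix.mul_one, hU']
    fin_cases j <;> simp [Matrix.one_apply]
  have hPtr : ∀ j : Fin 2, (P j).trace = 1 := by
    intro j
    rw [hP j, Matrix.trace_mul_cycle, hU', Matrix.one_mul]
    fin_cases j <;> simp [proj, Matrix.trace, Matrix.diagonal_apply, Fin.sum_univ_two]
  intro j
  have hmain : (P j ⊗ₖ (1 : Matrix (Fin 2 × Fin 2) (Fin 2 × Fin 2) ℂ)) * ρ
      * (P j ⊗ₖ (1 : Matrix (Fin 2 × Fin 2) (Fin 2 × Fin 2) ℂ))
      = (1 / 8 : ℂ) • (P j ⊗ₖ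
          (((1 + (-1 : ℝ) ^ (j : ℕ) * s * z₃ : ℝ) : ℂ) • (1 : Matrix (Fin 2 × Fin 2) (Fin 2 × Fin 2) ℂ)
            + (((-1 : ℝ) ^ (j : ℕ) * (c₁ * z₁) : ℝ) : ℂ) • (pauli1 ⊗ₖ pauli1)
            + (((-1 : ℝ) ^ (j : ℕ) * (c₂ * z₂) : ℝ) : ℂ) • (pauli2 ⊗ₖ pauli2)
            + (((-1 : ℝ) ^ (j : ℕ) * (c₃ * z₃) : ℝ) : ℂ) • (pauli3 ⊗ₖ pauli3)
            + (s : ℂ) • (pauli3 ⊗ₖ (1 : Matrix (Fin 2) (Fin 2) ℂ))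
            + (s : ℂ) • ((1 : Matrix (Fin 2) (Fin 2) ℂ) ⊗ₖ pauli3))) := by
    have h1 : (1 : Matrix (Fin 2 × Fin 2) (Fin 2 × Fin 2) ℂ)
        = (1 : Matrix (Fin 2) (Fin 2) ℂ) ⊗ₖ (1 : Matrix (Fin 2) (Fin 2) ℂ) :=
      (Matrix.one_kronecker_one).symm
    rw [hρ]
    rw [h1]
    simp only [Matrix.mul_smul, Matrix.smul_mul, Matrix.mul_add, Matrix.add_mul,
      ← Matrix.mul_kronecker_mul, Matrix.mul_one, Matrix.one_mul,
      Matrix.kronecker_smul, Matrix.smul_kronecker, Matrix.kronecker_add]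
    simp only [key, hPP, hw1, hw2, hw3]
    simp only [Matrix.smul_kronecker, Matrix.kronecker_smul, one_smul]
    push_cast
    module
  exact ⟨hmain, by
    rw [hmain]
    simp only [Matrix.trace_smul, Matrix.trace_kronecker, hPtr j]
    simp only [Matrix.trace_add, Matrix.trace_smul, Matrix.trace_kronecker,
      Matrix.trace_one]
    simp [pauli1, pauli2, pauli3, Matrix.trace_fin_two]
    push_cast
    ring⟩
end

section
/- Let N ≥ 2 be a natural number and μ a real number. For u = (u₁,…,u_{N−1}) ∈ {0,1}^{N−1} define ᾱ(u) = μ·Σ_{t=1}^{⌊(N−1)/2⌋} Σ_{S⊆{1,…,N−1}, |S|=2t} ∏_{i∈S}(−1)^{u_i} and δ̄(u) = μ·Σ_{t=0}^{⌊(N−2)/2⌋} Σ_{S⊆{1,…,N−1}, |S|=2t+1} ∏_{i∈S}(−1)^{u_i}. Then (1/2^N)·Σ_{u∈{0,1}^{N−1}} H_{ᾱ(u)}(δ̄(u)) = ((2^{N−1}−1)/2^{N−1})·(1−μ)·log₂(1−μ) + (1/2^{N−1})·(1+(2^{N−1}−1)μ)·log₂(1+(2^{N−1}−1)μ). -/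
open Finset


lemma parity_split (n : ℕ) (hn : 1 ≤ n) (c : ℕ → ℝ) :
    ∑ k ∈ range (n + 1), c k
      = c 0 + (∑ t ∈ Icc 1 (n / 2), c (2 * t)) + ∑ t ∈ range ((n - 1) / 2 + 1), c (2 * t + 1) := by
  induction n, hn using Nat.le_induction with
  | base => simp [Finset.sum_range_succ]
  | succ n hn ih =>
    rw [Finset.sum_range_succ, ih]
    rcases Nat.even_or_odd (n + 1) with ⟨m, hm⟩ | ⟨m, hm⟩
    · have h1 : (n + 1) / 2 = n / 2 + 1 := by omega
      have h2 : (n + 1 - 1) / 2 = (n - 1) / 2 := by omega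
      rw [h1, h2, Finset.sum_Icc_succ_top (by omega)]
      have : 2 * (n / 2 + 1) = n + 1 := by omega
      rw [this]; ring
    · have h1 : (n + 1) / 2 = n / 2 := by omega
      have h2 : (n + 1 - 1) / 2 + 1 = ((n - 1) / 2 + 1) + 1 := by omega
      rw [h1, h2]; conv_rhs => rw [Finset.sum_range_succ]
      have : 2 * ((n - 1) / 2 + 1) + 1 = n + 1 := by omega
      rw [this]; ring

lemma powerset_prod (n : ℕ) (f : Fin n → ℝ) :
    ∑ S ∈ (univ : Finset (Fin n)).powerset, ∏ i ∈ S, f i = ∏ i, (1 + f i) := by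
  have := Finset.prod_add f (fun _ => (1:ℝ)) univ
  simp only [Finset.prod_const_one, mul_one] at this
  rw [← this]
  exact Finset.prod_congr rfl fun i _ => by ring

lemma powerset_card_split (n : ℕ) (p : Finset (Fin n) → ℝ) :
    ∑ S ∈ (univ : Finset (Fin n)).powerset, p S
      = ∑ k ∈ range (n + 1), ∑ S ∈ powersetCard k (univ : Finset (Fin n)), p S := by
  rw [← Finset.sum_fiberwise_of_maps_to (g := Finset.card) (t := range (n+1))]
  · exact Finset.sum_congr rfl fun k _ =>
      Finset.sum_congr (by rw [powersetCard_eq_filter]) fun _ _ => rfl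
  · intro S hS
    simp only [mem_range, Nat.lt_succ_iff]
    simpa using (card_le_card (mem_powerset.1 hS)).trans (by simp)

lemma key_AB (n : ℕ) (hn : 1 ≤ n) (f : Fin n → ℝ) :
    (∑ t ∈ Icc 1 (n / 2), ∑ S ∈ powersetCard (2 * t) (univ : Finset (Fin n)), ∏ i ∈ S, f i)
      + ∑ t ∈ range ((n - 1) / 2 + 1),
          ∑ S ∈ powersetCard (2 * t + 1) (univ : Finset (Fin n)), ∏ i ∈ S, f i
    = ∏ i, (1 + f i) - 1 := by
  have h := parity_split n hn (fun k => ∑ S ∈ powersetCard k (univ : Finset (Fin n)), ∏ i ∈ S, f i)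
  rw [← powerset_card_split, powerset_prod] at h
  simp only [Finset.powersetCard_zero, Finset.sum_singleton, Finset.prod_empty] at h
  linarith

lemma prod_neg_card (n : ℕ) (S : Finset (Fin n)) (f : Fin n → ℝ) :
    ∏ i ∈ S, (-f i) = (-1 : ℝ) ^ S.card * ∏ i ∈ S, f i := by
  rw [← Finset.prod_const, ← Finset.prod_mul_distrib]
  exact Finset.prod_congr rfl fun i _ => by ring

lemma key_sub (n : ℕ) (hn : 1 ≤ n) (f : Fin n → ℝ) :
    (∑ t ∈ Icc 1 (n / 2), ∑ S ∈ powersetCard (2 * t) (univ : Finset (Fin n)), ∏ i ∈ S, f i)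
      - ∑ t ∈ range ((n - 1) / 2 + 1),
          ∑ S ∈ powersetCard (2 * t + 1) (univ : Finset (Fin n)), ∏ i ∈ S, f i
    = ∏ i, (1 - f i) - 1 := by
  have h := key_AB n hn (fun i => -f i)
  have heven : ∀ t, ∑ S ∈ powersetCard (2 * t) (univ : Finset (Fin n)), ∏ i ∈ S, (-f i)
      = ∑ S ∈ powersetCard (2 * t) (univ : Finset (Fin n)), ∏ i ∈ S, f i := by
    intro t
    refine Finset.sum_congr rfl fun S hS => ?_
    rw [prod_neg_card, (Finset.mem_powersetCard.1 hS).2, pow_mul]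
    simp
  have hodd : ∀ t, ∑ S ∈ powersetCard (2 * t + 1) (univ : Finset (Fin n)), ∏ i ∈ S, (-f i)
      = -∑ S ∈ powersetCard (2 * t + 1) (univ : Finset (Fin n)), ∏ i ∈ S, f i := by
    intro t
    rw [← Finset.sum_neg_distrib]
    refine Finset.sum_congr rfl fun S hS => ?_
    rw [prod_neg_card, (Finset.mem_powersetCard.1 hS).2, pow_succ, pow_mul]
    simp
  simp only [heven, hodd, Finset.sum_neg_distrib] at h
  have hp : ∏ i, (1 + -f i) = ∏ i : Fin n, (1 - f i) :=
    Finset.prod_congr rfl fun i _ => by ring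
  rw [hp] at h
  linarith

lemma sum_ite_const {ι : Type*} [Fintype ι] [DecidableEq ι] (c : ι) (a b : ℝ) :
    ∑ u : ι, (if u = c then a else b) = a + ((Fintype.card ι : ℝ) - 1) * b := by
  have h : ∀ u : ι, (if u = c then a else b) = (if u = c then a - b else 0) + b := by
    intro u; by_cases h : u = c <;> simp [h]
  simp only [h, Finset.sum_add_distrib, Finset.sum_ite_eq' univ c, Finset.sum_const,
    Finset.mem_univ, if_true, Finset.card_univ, nsmul_eq_mul]
  ring

/-- With `ᾱ(u) = μ·Σ_{t=1}^{⌊(N−1)/2⌋} Σ_{|S|=2t} ∏_{i∈S}(−1)^{u_i}` and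
`δ̄(u) = μ·Σ_{t=0}^{⌊(N−2)/2⌋} Σ_{|S|=2t+1} ∏_{i∈S}(−1)^{u_i}` over subsets of `{1,…,N−1}`,
one has `(1/2^N)·Σ_{u∈{0,1}^{N−1}} H_{ᾱ(u)}(δ̄(u))
  = ((2^{N−1}−1)/2^{N−1})(1−μ)log₂(1−μ) + (1/2^{N−1})(1+(2^{N−1}−1)μ)log₂(1+(2^{N−1}−1)μ)`. -/
theorem stmt_18 (N : ℕ) (hN : 2 ≤ N) (μ : ℝ)
    (α δ : (Fin (N - 1) → Fin 2) → ℝ)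
    (hα : ∀ u, α u = μ * ∑ t ∈ Finset.Icc 1 ((N - 1) / 2),
        ∑ S ∈ Finset.powersetCard (2 * t) (Finset.univ : Finset (Fin (N - 1))),
          ∏ i ∈ S, (-1 : ℝ) ^ ((u i : Fin 2) : ℕ))
    (hδ : ∀ u, δ u = μ * ∑ t ∈ Finset.range ((N - 2) / 2 + 1),
        ∑ S ∈ Finset.powersetCard (2 * t + 1) (Finset.univ : Finset (Fin (N - 1))),
          ∏ i ∈ S, (-1 : ℝ) ^ ((u i : Fin 2) : ℕ)) :
    (1 / 2 ^ N : ℝ) * ∑ u : Fin (N - 1) → Fin 2, Hy (α u) (δ u)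
      = ((2 ^ (N - 1) - 1) / 2 ^ (N - 1) : ℝ) * (1 - μ) * Real.logb 2 (1 - μ)
        + (1 / 2 ^ (N - 1) : ℝ) * (1 + (2 ^ (N - 1) - 1) * μ)
          * Real.logb 2 (1 + (2 ^ (N - 1) - 1) * μ) := by
  have hn : 1 ≤ N - 1 := by omega
  have h22 : N - 1 - 1 = N - 2 := by omega
  set g : ℝ → ℝ := fun P => (1 - μ + μ * P) * Real.logb 2 (1 - μ + μ * P) with hg
  -- the two products
  have hsum : ∀ u : Fin (N - 1) → Fin 2, 1 + α u + δ u
      = 1 - μ + μ * ∏ i, (1 + (-1 : ℝ) ^ ((u i : Fin 2) : ℕ)) := by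
    intro u
    have := key_AB (N - 1) hn (fun i => (-1 : ℝ) ^ ((u i : Fin 2) : ℕ))
    rw [h22] at this
    rw [hα, hδ]
    linear_combination μ * this
  have hsub : ∀ u : Fin (N - 1) → Fin 2, 1 + α u - δ u
      = 1 - μ + μ * ∏ i, (1 - (-1 : ℝ) ^ ((u i : Fin 2) : ℕ)) := by
    intro u
    have := key_sub (N - 1) hn (fun i => (-1 : ℝ) ^ ((u i : Fin 2) : ℕ))
    rw [h22] at this
    rw [hα, hδ]
    linear_combination μ * this
  have hPp : ∀ u : Fin (N - 1) → Fin 2, ∏ i, (1 + (-1 : ℝ) ^ ((u i : Fin 2) : ℕ))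
      = if u = (fun _ => 0) then (2 : ℝ) ^ (N - 1) else 0 := by
    intro u
    by_cases h : u = fun _ => 0
    · subst h; simp; norm_num
    · rw [if_neg h]
      obtain ⟨i, hi⟩ := Function.ne_iff.1 h
      refine Finset.prod_eq_zero (Finset.mem_univ i) ?_
      have h1 : (u i : ℕ) < 2 := (u i).isLt
      have h2 : (u i : ℕ) ≠ 0 := fun hh => hi (Fin.ext hh)
      have : ((u i : Fin 2) : ℕ) = 1 := by omega
      rw [this]; norm_num
  have hPm : ∀ u : Fin (N - 1) → Fin 2, ∏ i, (1 - (-1 : ℝ) ^ ((u i : Fin 2) : ℕ))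
      = if u = (fun _ => 1) then (2 : ℝ) ^ (N - 1) else 0 := by
    intro u
    by_cases h : u = fun _ => 1
    · subst h; simp; norm_num
    · rw [if_neg h]
      obtain ⟨i, hi⟩ := Function.ne_iff.1 h
      refine Finset.prod_eq_zero (Finset.mem_univ i) ?_
      have h1 : (u i : ℕ) < 2 := (u i).isLt
      have h2 : (u i : ℕ) ≠ 1 := fun hh => hi (Fin.ext (by simp [hh]))
      have : ((u i : Fin 2) : ℕ) = 0 := by omega
      rw [this]; norm_num
  have hH : ∀ u : Fin (N - 1) → Fin 2, Hy (α u) (δ u)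
      = (if u = (fun _ => 0) then g ((2 : ℝ) ^ (N - 1)) else g 0)
        + (if u = (fun _ => 1) then g ((2 : ℝ) ^ (N - 1)) else g 0) := by
    intro u
    rw [Hy, show 1 + α u + δ u = 1 - μ + μ * ∏ i, (1 + (-1 : ℝ) ^ ((u i : Fin 2) : ℕ))
      from hsum u, show 1 + α u - δ u = 1 - μ + μ * ∏ i, (1 - (-1 : ℝ) ^ ((u i : Fin 2) : ℕ))
      from hsub u, hPp u, hPm u, apply_ite (fun P => (1 - μ + μ * P) * Real.logb 2 (1 - μ + μ * P)),
      apply_ite (fun P => (1 - μ + μ * P) * Real.logb 2 (1 - μ + μ * P))]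
  have hcard : ((Fintype.card (Fin (N - 1) → Fin 2) : ℝ)) = 2 ^ (N - 1) := by
    simp [Fintype.card_fun]
  rw [Finset.sum_congr rfl (fun u _ => hH u), Finset.sum_add_distrib,
    sum_ite_const, sum_ite_const, hcard]
  have hg0 : g 0 = (1 - μ) * Real.logb 2 (1 - μ) := by
    rw [hg]; norm_num
  have hg2 : g ((2 : ℝ) ^ (N - 1)) = (1 + (2 ^ (N - 1) - 1) * μ)
      * Real.logb 2 (1 + (2 ^ (N - 1) - 1) * μ) := by
    simp only [hg]
    have : (1 : ℝ) - μ + μ * 2 ^ (N - 1) = 1 + (2 ^ (N - 1) - 1) * μ := by ring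
    rw [this]
  rw [hg0, hg2, show N = (N - 1) + 1 by omega]
  have h2 : ((2 : ℝ) ^ (N - 1)) ≠ 0 := by positivity
  rw [pow_succ]
  simp only [Nat.add_sub_cancel]
  field_simp
  ring
end
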